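/- arXiv:1006.3487 — 2 statements merged into one kernel-verified Lean document; each statement's English description precedes it below -/
import Mathlib

section
/- For every n ≥ 1 and every choice of positive parameters a = (a_{ij}), the polytope Ass_n^{III}(a) is contained in the hyperplane {x ∈ ℝ^{n+1} : x_1 + … + x_{n+1} = Σ_{1≤i≤j≤n+1} a_{ij}}, its affine span has dimension exactly n, and it is a simple polytope: every vertex of Ass_n^{III}(a) lies on exactly n facets. -/
open Finset

/-- Cyclic adjacency of vertex labels of the convex `m`-gon. -/
def adjacent (m : ℕ) (a b : Fin m) : Prop :=
  (a.val + 1) % m = b.val ∨ (b.val + 1) % m = a.val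

/-- A diagonal of the labeled `m`-gon: an unordered pair of distinct,
non cyclically adjacent labels. -/
def IsDiagonal (m : ℕ) (d : Finset (Fin m)) : Prop :=
  ∃ a b : Fin m, a ≠ b ∧ ¬ adjacent m a b ∧ d = {a, b}

/-- Two diagonals cross iff their endpoints alternate in cyclic order
(equivalently, exactly one endpoint of the second lies strictly between
the two endpoints of the first). -/
def Crosses (m : ℕ) (d e : Finset (Fin m)) : Prop :=
  ∃ p q r s : Fin m, p < q ∧ q < r ∧ r < s ∧
    ((d = {p, r} ∧ e = {q, s}) ∨ (d = {q, s} ∧ e = {p, r}))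

/-- A triangulation: a maximal set of pairwise non-crossing diagonals. -/
def IsTriangulation (m : ℕ) (t : Finset (Finset (Fin m))) : Prop :=
  (∀ d ∈ t, IsDiagonal m d) ∧
  (∀ d ∈ t, ∀ e ∈ t, ¬ Crosses m d e) ∧
  (∀ d, IsDiagonal m d → (∀ e ∈ t, ¬ Crosses m d e) → d ∈ t)

/-- The pair `{a, b}` is a polygon edge (cyclically adjacent labels) or a
diagonal belonging to `t`. -/
def edgeOrDiag (m : ℕ) (t : Finset (Finset (Fin m))) (a b : Fin m) : Prop :=
  adjacent m a b ∨ ({a, b} : Finset (Fin m)) ∈ t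

/-- Area of the triangle with vertices `p`, `q`, `r` in the plane. -/
noncomputable def triArea (p q r : ℝ × ℝ) : ℝ :=
  |(q.1 - p.1) * (r.2 - p.2) - (r.1 - p.1) * (q.2 - p.2)| / 2

open Classical in
/-- The GKZ vector of a triangulation `t`: its `i`-th coordinate is the sum of
the areas of the triangles of `t` containing the vertex `i`. -/
noncomputable def gkz (m : ℕ) (q : Fin m → ℝ × ℝ) (t : Finset (Finset (Fin m))) :
    Fin m → ℝ := fun i =>
  ∑ a : Fin m, ∑ b : Fin m, ∑ c : Fin m,
    if a < b ∧ b < c ∧ edgeOrDiag m t a b ∧ edgeOrDiag m t b c ∧ edgeOrDiag m t a c ∧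
        (i = a ∨ i = b ∨ i = c)
    then triArea (q a) (q b) (q c) else 0

/-- The points `q 0, …, q (m-1)` are in strictly convex position, labeled
counterclockwise: every triple of labels in increasing order is positively oriented. -/
def ConvexCCW (m : ℕ) (q : Fin m → ℝ × ℝ) : Prop :=
  ∀ i j k : Fin m, i < j → j < k →
    0 < ((q j).1 - (q i).1) * ((q k).2 - (q i).2) -
        ((q k).1 - (q i).1) * ((q j).2 - (q i).2)

/-- The secondary polytope of the convex polygon with vertices `q`. -/
noncomputable def secondary (m : ℕ) (q : Fin m → ℝ × ℝ) : Set (Fin m → ℝ) :=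
  convexHull ℝ {v | ∃ t, IsTriangulation m t ∧ v = gkz m q t}

def dot {k : ℕ} (w x : Fin k → ℝ) : ℝ := ∑ i, w i * x i

/-- The set of points of `P` maximizing the linear functional `⟨w, ·⟩`. -/
def maxFace {k : ℕ} (P : Set (Fin k → ℝ)) (w : Fin k → ℝ) : Set (Fin k → ℝ) :=
  {x ∈ P | ∀ y ∈ P, dot w y ≤ dot w x}

/-- A face of `P`: the set of points of `P` maximizing some linear functional. -/
def IsFaceOf {k : ℕ} (P F : Set (Fin k → ℝ)) : Prop :=
  ∃ w : Fin k → ℝ, F = maxFace P w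

/-- Linear span of the difference set of `F`. -/
def spanDiff {k : ℕ} (F : Set (Fin k → ℝ)) : Submodule ℝ (Fin k → ℝ) :=
  Submodule.span ℝ {z | ∃ u ∈ F, ∃ v ∈ F, z = u - v}

/-- Dimension of a set: the rank of the span of its difference set. -/
noncomputable def dimOf {k : ℕ} (F : Set (Fin k → ℝ)) : ℕ :=
  Module.finrank ℝ (spanDiff F)

/-- A facet: a face of dimension one less than the polytope. -/
def IsFacetOf {k : ℕ} (P F : Set (Fin k → ℝ)) : Prop :=
  IsFaceOf P F ∧ dimOf F + 1 = dimOf P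

/-- Two facets are parallel if the linear spans of their difference sets coincide. -/
def ParallelFaces {k : ℕ} (F F' : Set (Fin k → ℝ)) : Prop :=
  spanDiff F = spanDiff F'

/-- A vertex of `P`. -/
def vertexOf {k : ℕ} (P : Set (Fin k → ℝ)) (v : Fin k → ℝ) : Prop :=
  v ∈ P ∧ IsFaceOf P {v}

/-- The standard basis vector `e i` of `ℝ^k`. -/
noncomputable def eVec {k : ℕ} (i : Fin k) : Fin k → ℝ := Pi.single i 1

/-- The simple root `α i = e i − e (i+1)` of type `A n`. -/
noncomputable def simpleRoot (n : ℕ) (i : Fin n) : Fin (n+1) → ℝ :=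
  eVec i.castSucc - eVec i.succ

/-- Almost positive roots of type `A n`: positive roots together with the
negatives of the simple roots. -/
def AlmostPositive (n : ℕ) (β : Fin (n+1) → ℝ) : Prop :=
  (∃ i j : Fin (n+1), i < j ∧ β = eVec i - eVec j) ∨ (∃ i : Fin n, β = -simpleRoot n i)

/-- The `i`-th snake diagonal `δ_i = {⌈(i+1)/2⌉, n+2−⌊(i+1)/2⌋}` of the
`(n+3)`-gon (here `i : Fin n` is `0`-based). -/
def snake (n : ℕ) (i : Fin n) : Finset (Fin (n+3)) :=
  {⟨(i.val + 2) / 2, by have := i.isLt; omega⟩, ⟨n + 2 - (i.val + 1) / 2, by omega⟩}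

/-- The correspondence between almost positive roots and diagonals of the
`(n+3)`-gon: `−α i` corresponds to the snake diagonal `δ i`, and the positive
root `α i + ⋯ + α j = e i − e (j+1)` corresponds to the unique diagonal crossing
exactly the snake diagonals `δ i, …, δ j`. -/
def RootDiag (n : ℕ) (β : Fin (n+1) → ℝ) (d : Finset (Fin (n+3))) : Prop :=
  (∃ i : Fin n, β = -simpleRoot n i ∧ d = snake n i) ∨
  (∃ i j : Fin n, i ≤ j ∧ β = eVec i.castSucc - eVec j.succ ∧ IsDiagonal (n+3) d ∧
    ∀ k : Fin n, (Crosses (n+3) d (snake n k) ↔ i ≤ k ∧ k ≤ j))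

/-- Two almost positive roots are compatible if their corresponding diagonals
do not cross. -/
def Compatible (n : ℕ) (β γ : Fin (n+1) → ℝ) : Prop :=
  ∀ d e : Finset (Fin (n+3)), RootDiag n β d → RootDiag n γ e → ¬ Crosses (n+3) d e

/-- A cluster of type `A n`: a maximal set of pairwise compatible almost
positive roots. -/
def IsCluster (n : ℕ) (C : Finset (Fin (n+1) → ℝ)) : Prop :=
  (∀ β ∈ C, AlmostPositive n β) ∧
  (∀ β ∈ C, ∀ γ ∈ C, Compatible n β γ) ∧
  (∀ β, AlmostPositive n β → (∀ γ ∈ C, Compatible n β γ) → β ∈ C)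

/-- The cone of nonnegative linear combinations of the elements of `C`. -/
def coneOf (n : ℕ) (C : Finset (Fin (n+1) → ℝ)) : Set (Fin (n+1) → ℝ) :=
  {x | ∃ c : (Fin (n+1) → ℝ) → ℝ, (∀ β ∈ C, 0 ≤ c β) ∧ x = ∑ β ∈ C, c β • β}

/-- The normal cone of `P` at `v`, taken within the hyperplane
`H = {x : ∑ i, x i = 0}`. -/
def normalConeIn (n : ℕ) (P : Set (Fin (n+1) → ℝ)) (v : Fin (n+1) → ℝ) :
    Set (Fin (n+1) → ℝ) :=
  {w | (∑ i, w i = 0) ∧ ∀ x ∈ P, dot w x ≤ dot w v}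

/-- A cluster-fan polytope of type `A n`: a polytope contained in the
hyperplane `H`, of dimension `n`, whose vertex normal cones within `H` are
exactly the cones spanned by the clusters of type `A n`. -/
def IsClusterFanPolytope (n : ℕ) (P : Set (Fin (n+1) → ℝ)) : Prop :=
  (∃ V : Finset (Fin (n+1) → ℝ), P = convexHull ℝ (V : Set (Fin (n+1) → ℝ))) ∧
  (∀ x ∈ P, ∑ i, x i = 0) ∧
  dimOf P = n ∧
  {S : Set (Fin (n+1) → ℝ) | ∃ v, vertexOf P v ∧ S = normalConeIn n P v} =
    {S : Set (Fin (n+1) → ℝ) |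
      ∃ C : Finset (Fin (n+1) → ℝ), IsCluster n C ∧ S = coneOf n C}

/-- The simplex `Δ_{[i,…,j]} = conv{e i, …, e j} ⊂ ℝ^{n+1}`. -/
noncomputable def stdSimplexSeg (n : ℕ) (i j : Fin (n+1)) : Set (Fin (n+1) → ℝ) :=
  convexHull ℝ {x | ∃ k : Fin (n+1), i ≤ k ∧ k ≤ j ∧ x = eVec k}

/-- Index set of the pairs `1 ≤ i ≤ j ≤ n+1`. -/
def pairIdx (n : ℕ) : Finset (Fin (n+1) × Fin (n+1)) :=
  Finset.univ.filter (fun p => p.1 ≤ p.2)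

/-- The associahedron `Ass_n^{III}(a)`: the Minkowski sum
`∑_{i ≤ j} a_{ij} Δ_{[i,…,j]}`. -/
noncomputable def AssIII (n : ℕ) (a : Fin (n+1) × Fin (n+1) → ℝ) :
    Set (Fin (n+1) → ℝ) :=
  {x | ∃ f : Fin (n+1) × Fin (n+1) → Fin (n+1) → ℝ,
    (∀ p ∈ pairIdx n, f p ∈ stdSimplexSeg n p.1 p.2) ∧
    x = ∑ p ∈ pairIdx n, a p • f p}

/-- The functional with first `i` coordinates `1`, the rest `0`. -/
def wFun (n : ℕ) (i : ℕ) : Fin (n+1) → ℝ := fun k => if (k : ℕ) < i then 1 else 0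
namespace Ass12

variable {n : ℕ}

lemma eVec_apply {k i : Fin (n+1)} : eVec k i = if k = i then (1:ℝ) else 0 := by
  simp [eVec, Pi.single_apply, eq_comm]

lemma eVec_injective : Function.Injective (eVec (k := n+1)) := by
  intro k l h
  by_contra hne
  have h1 := congrFun h l
  rw [eVec_apply, eVec_apply] at h1
  simp [hne] at h1

lemma dot_add {w x y : Fin (n+1) → ℝ} : dot w (x + y) = dot w x + dot w y := by
  simp [dot, mul_add, Finset.sum_add_distrib]

lemma dot_smul {w x : Fin (n+1) → ℝ} {c : ℝ} : dot w (c • x) = c * dot w x := by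
  simp [dot, Finset.mul_sum]; apply Finset.sum_congr rfl; intros; ring

lemma dot_sum {ι : Type*} {s : Finset ι} {w : Fin (n+1) → ℝ} {f : ι → Fin (n+1) → ℝ} :
    dot w (∑ p ∈ s, f p) = ∑ p ∈ s, dot w (f p) := by
  simp only [dot, Finset.sum_apply, Finset.mul_sum]
  exact Finset.sum_comm

lemma dot_eVec {w : Fin (n+1) → ℝ} {k : Fin (n+1)} : dot w (eVec k) = w k := by
  simp only [dot, eVec_apply]
  rw [Finset.sum_eq_single k] <;> simp +contextual [eq_comm]

/-- Membership in the convex hull of standard basis vectors indexed by `M`. -/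
lemma mem_hull_eVec_iff {M : Finset (Fin (n+1))} {y : Fin (n+1) → ℝ} :
    y ∈ convexHull ℝ (↑(M.image eVec) : Set (Fin (n+1) → ℝ)) ↔
      ∃ c : Fin (n+1) → ℝ, (∀ k ∈ M, 0 ≤ c k) ∧ (∑ k ∈ M, c k = 1) ∧
        y = ∑ k ∈ M, c k • eVec k := by
  constructor
  · intro hy
    rw [Finset.convexHull_eq] at hy
    obtain ⟨W, hW0, hW1, hWc⟩ := hy
    refine ⟨fun k => W (eVec k), fun k hk => hW0 _ (Finset.mem_image_of_mem _ hk), ?_, ?_⟩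
    · rw [← hW1]; exact (Finset.sum_image (fun a _ b _ h => eVec_injective h)).symm
    · rw [← hWc, Finset.centerMass_eq_of_sum_1 _ _ hW1]
      rw [Finset.sum_image (fun a _ b _ h => eVec_injective h)]
      simp
  · rintro ⟨c, hc0, hc1, rfl⟩
    have := Finset.centerMass_mem_convexHull (t := M) (w := c) (z := eVec)
      (hw₀ := hc0) (hws := by rw [hc1]; norm_num)
      (hz := fun k hk => Finset.mem_coe.2 (Finset.mem_image_of_mem _ hk))
    rwa [Finset.centerMass_eq_of_sum_1 _ _ hc1] at this


open Classical in
/-- The set of maximizers of `w` on the interval `[p.1, p.2]`. -/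
noncomputable def Mw (w : Fin (n+1) → ℝ) (p : Fin (n+1) × Fin (n+1)) : Finset (Fin (n+1)) :=
  (Finset.Icc p.1 p.2).filter (fun k => ∀ l ∈ Finset.Icc p.1 p.2, w l ≤ w k)

open Classical in
lemma mem_Mw {w : Fin (n+1) → ℝ} {p : Fin (n+1) × Fin (n+1)} {k : Fin (n+1)} :
    k ∈ Mw w p ↔ k ∈ Finset.Icc p.1 p.2 ∧ ∀ l ∈ Finset.Icc p.1 p.2, w l ≤ w k := by
  simp [Mw]

lemma Mw_subset {w : Fin (n+1) → ℝ} {p : Fin (n+1) × Fin (n+1)} : Mw w p ⊆ Finset.Icc p.1 p.2 :=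
  fun k hk => (mem_Mw.1 hk).1

lemma Mw_nonempty {w : Fin (n+1) → ℝ} {p : Fin (n+1) × Fin (n+1)} (hp : p.1 ≤ p.2) :
    (Mw w p).Nonempty := by
  obtain ⟨b, hb, hbmax⟩ := Finset.exists_max_image (Finset.Icc p.1 p.2) w
    (by rw [Finset.nonempty_Icc]; exact hp)
  exact ⟨b, mem_Mw.2 ⟨hb, hbmax⟩⟩

noncomputable def pick (w : Fin (n+1) → ℝ) (p : Fin (n+1) × Fin (n+1)) : Fin (n+1) :=
  if h : (Mw w p).Nonempty then h.choose else 0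

lemma pick_mem {w : Fin (n+1) → ℝ} {p : Fin (n+1) × Fin (n+1)} (hp : p.1 ≤ p.2) :
    pick w p ∈ Mw w p := by
  rw [pick, dif_pos (Mw_nonempty hp)]
  exact (Mw_nonempty hp).choose_spec

lemma w_eq_on_Mw {w : Fin (n+1) → ℝ} {p : Fin (n+1) × Fin (n+1)} {k l : Fin (n+1)}
    (hk : k ∈ Mw w p) (hl : l ∈ Mw w p) : w k = w l :=
  le_antisymm ((mem_Mw.1 hl).2 k (mem_Mw.1 hk).1) ((mem_Mw.1 hk).2 l (mem_Mw.1 hl).1)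

lemma mem_pairIdx {p : Fin (n+1) × Fin (n+1)} : p ∈ pairIdx n ↔ p.1 ≤ p.2 := by
  simp [pairIdx]

lemma stdSimplexSeg_eq {i j : Fin (n+1)} :
    stdSimplexSeg n i j = convexHull ℝ (↑((Finset.Icc i j).image eVec) : Set (Fin (n+1) → ℝ)) := by
  unfold stdSimplexSeg
  congr 1
  ext x
  simp only [Set.mem_setOf_eq, Finset.coe_image, Set.mem_image, Finset.mem_coe, Finset.mem_Icc]
  constructor
  · rintro ⟨k, h1, h2, rfl⟩; exact ⟨k, ⟨h1, h2⟩, rfl⟩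
  · rintro ⟨k, ⟨h1, h2⟩, rfl⟩; exact ⟨k, h1, h2, rfl⟩

lemma dot_le_of_hull {u : Fin (n+1) → ℝ} {M : Finset (Fin (n+1))} {b : ℝ}
    (hM : ∀ k ∈ M, u k ≤ b) {y : Fin (n+1) → ℝ}
    (hy : y ∈ convexHull ℝ (↑(M.image eVec) : Set (Fin (n+1) → ℝ))) : dot u y ≤ b := by
  obtain ⟨c, hc0, hc1, rfl⟩ := mem_hull_eVec_iff.1 hy
  rw [dot_sum]
  calc ∑ k ∈ M, dot u (c k • eVec k) = ∑ k ∈ M, c k * u k := by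
        apply Finset.sum_congr rfl; intro k _; rw [dot_smul, dot_eVec]
    _ ≤ ∑ k ∈ M, c k * b := by
        apply Finset.sum_le_sum; intro k hk
        exact mul_le_mul_of_nonneg_left (hM k hk) (hc0 k hk)
    _ = b := by rw [← Finset.sum_mul, hc1, one_mul]

lemma dot_eq_of_hull {u : Fin (n+1) → ℝ} {M : Finset (Fin (n+1))} {b : ℝ}
    (hM : ∀ k ∈ M, u k = b) {y : Fin (n+1) → ℝ}
    (hy : y ∈ convexHull ℝ (↑(M.image eVec) : Set (Fin (n+1) → ℝ))) : dot u y = b := by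
  obtain ⟨c, hc0, hc1, rfl⟩ := mem_hull_eVec_iff.1 hy
  rw [dot_sum]
  calc ∑ k ∈ M, dot u (c k • eVec k) = ∑ k ∈ M, c k * b := by
        apply Finset.sum_congr rfl; intro k hk; rw [dot_smul, dot_eVec, hM k hk]
    _ = b := by rw [← Finset.sum_mul, hc1, one_mul]

/-- The candidate face: sums with each `g p` in the hull of the maximizers of `w`. -/
noncomputable def Sface (a : Fin (n+1) × Fin (n+1) → ℝ) (w : Fin (n+1) → ℝ) :
    Set (Fin (n+1) → ℝ) :=
  {x | ∃ g : (Fin (n+1) × Fin (n+1)) → (Fin (n+1) → ℝ),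
    (∀ p ∈ pairIdx n, g p ∈ convexHull ℝ (↑((Mw w p).image eVec) : Set (Fin (n+1) → ℝ))) ∧
    x = ∑ p ∈ pairIdx n, a p • g p}

lemma hull_Mw_subset_seg {w : Fin (n+1) → ℝ} {p : Fin (n+1) × Fin (n+1)} :
    convexHull ℝ (↑((Mw w p).image eVec) : Set (Fin (n+1) → ℝ)) ⊆ stdSimplexSeg n p.1 p.2 := by
  rw [stdSimplexSeg_eq]
  exact convexHull_mono (by exact_mod_cast Finset.image_subset_image Mw_subset)

lemma Sface_subset {a w : _} : Sface (n := n) a w ⊆ AssIII n a := by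
  rintro x ⟨g, hg, rfl⟩
  exact ⟨g, fun p hp => hull_Mw_subset_seg (hg p hp), rfl⟩

lemma dot_seg_le {w : Fin (n+1) → ℝ} {p : Fin (n+1) × Fin (n+1)} (hp : p.1 ≤ p.2)
    {f : Fin (n+1) → ℝ} (hf : f ∈ stdSimplexSeg n p.1 p.2) : dot w f ≤ w (pick w p) := by
  rw [stdSimplexSeg_eq] at hf
  exact dot_le_of_hull (fun k hk => (mem_Mw.1 (pick_mem hp)).2 k hk) hf

lemma dot_hull_Mw {w : Fin (n+1) → ℝ} {p : Fin (n+1) × Fin (n+1)} (hp : p.1 ≤ p.2)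
    {g : Fin (n+1) → ℝ}
    (hg : g ∈ convexHull ℝ (↑((Mw w p).image eVec) : Set (Fin (n+1) → ℝ))) :
    dot w g = w (pick w p) :=
  dot_eq_of_hull (fun k hk => w_eq_on_Mw hk (pick_mem hp)) hg

lemma dot_on_Sface {a w : _} {x : Fin (n+1) → ℝ} (hx : x ∈ Sface (n := n) a w) :
    dot w x = ∑ p ∈ pairIdx n, a p * w (pick w p) := by
  obtain ⟨g, hg, rfl⟩ := hx
  rw [dot_sum]
  apply Finset.sum_congr rfl
  intro p hp
  rw [dot_smul, dot_hull_Mw (mem_pairIdx.1 hp) (hg p hp)]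

lemma dot_on_AssIII {a : Fin (n+1) × Fin (n+1) → ℝ}
    (ha : ∀ p : Fin (n+1) × Fin (n+1), p.1 ≤ p.2 → 0 < a p) {w : Fin (n+1) → ℝ}
    {x : Fin (n+1) → ℝ} (hx : x ∈ AssIII n a) :
    dot w x ≤ ∑ p ∈ pairIdx n, a p * w (pick w p) := by
  obtain ⟨f, hf, rfl⟩ := hx
  rw [dot_sum]
  apply Finset.sum_le_sum
  intro p hp
  rw [dot_smul]
  exact mul_le_mul_of_nonneg_left (dot_seg_le (mem_pairIdx.1 hp) (hf p hp))
    (le_of_lt (ha p (mem_pairIdx.1 hp)))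

lemma Sface_nonempty {a w : _} : (Sface (n := n) a w).Nonempty := by
  refine ⟨∑ p ∈ pairIdx n, a p • eVec (pick w p), fun p => eVec (pick w p), fun p hp => ?_, rfl⟩
  exact subset_convexHull ℝ _ (Finset.mem_coe.2 (Finset.mem_image_of_mem _ (pick_mem (mem_pairIdx.1 hp))))

theorem maxFace_eq_Sface {a : Fin (n+1) × Fin (n+1) → ℝ}
    (ha : ∀ p : Fin (n+1) × Fin (n+1), p.1 ≤ p.2 → 0 < a p) (w : Fin (n+1) → ℝ) :
    maxFace (AssIII n a) w = Sface a w := by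
  ext x
  constructor
  · rintro ⟨hxP, hmax⟩
    obtain ⟨x₀, hx₀⟩ := Sface_nonempty (a := a) (w := w)
    have hx₀P := Sface_subset hx₀
    have hle := hmax x₀ hx₀P
    rw [dot_on_Sface hx₀] at hle
    obtain ⟨f, hf, rfl⟩ := hxP
    -- each term must achieve the max
    have hterm : ∀ p ∈ pairIdx n, dot w (f p) = w (pick w p) := by
      intro p hp
      by_contra hne
      have hlt : a p * dot w (f p) < a p * w (pick w p) :=
        mul_lt_mul_of_pos_left
          (lt_of_le_of_ne (dot_seg_le (mem_pairIdx.1 hp) (hf p hp)) hne)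
          (ha p (mem_pairIdx.1 hp))
      have hstrict : dot w (∑ p ∈ pairIdx n, a p • f p) < ∑ p ∈ pairIdx n, a p * w (pick w p) := by
        rw [dot_sum]
        apply Finset.sum_lt_sum
        · intro q hq
          rw [dot_smul]
          exact mul_le_mul_of_nonneg_left (dot_seg_le (mem_pairIdx.1 hq) (hf q hq))
            (le_of_lt (ha q (mem_pairIdx.1 hq)))
        · exact ⟨p, hp, by rw [dot_smul]; exact hlt⟩
      linarith
    refine ⟨f, fun p hp => ?_, rfl⟩
    -- show f p ∈ hull of Mw
    have hp' := mem_pairIdx.1 hp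
    have hfp := hf p hp
    rw [stdSimplexSeg_eq] at hfp
    obtain ⟨c, hc0, hc1, hrep⟩ := mem_hull_eVec_iff.1 hfp
    have hdot : ∑ k ∈ Finset.Icc p.1 p.2, c k * w k = w (pick w p) := by
      have := hterm p hp
      rw [hrep, dot_sum] at this
      rw [← this]
      apply Finset.sum_congr rfl
      intro k _; rw [dot_smul, dot_eVec]
    have hzero : ∀ k ∈ Finset.Icc p.1 p.2, c k * (w (pick w p) - w k) = 0 := by
      have hsum : ∑ k ∈ Finset.Icc p.1 p.2, c k * (w (pick w p) - w k) = 0 := by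
        simp only [mul_sub]
        rw [Finset.sum_sub_distrib, ← Finset.sum_mul, hc1, one_mul, hdot, sub_self]
      intro k hk
      have := (Finset.sum_eq_zero_iff_of_nonneg ?_).1 hsum k hk
      · exact this
      · intro l hl
        have hwl : w l ≤ w (pick w p) := (mem_Mw.1 (pick_mem hp')).2 l hl
        exact mul_nonneg (hc0 l hl) (by linarith)
    have hcMw : ∀ k ∈ Finset.Icc p.1 p.2, k ∉ Mw w p → c k = 0 := by
      intro k hk hkM
      rw [mem_Mw] at hkM
      push_neg at hkM
      obtain ⟨l, hl, hwl⟩ := hkM hk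
      have hwk : w k < w (pick w p) :=
        lt_of_lt_of_le hwl ((mem_Mw.1 (pick_mem hp')).2 l hl)
      have := hzero k hk
      rcases mul_eq_zero.1 this with h | h
      · exact h
      · linarith
    rw [mem_hull_eVec_iff]
    refine ⟨c, fun k hk => hc0 k (Mw_subset hk), ?_, ?_⟩
    · rw [Finset.sum_subset Mw_subset (fun k hk hk' => hcMw k hk hk')]
      exact hc1
    · rw [hrep]
      rw [Finset.sum_subset Mw_subset (fun k hk hk' => by rw [hcMw k hk hk', zero_smul])]
  · intro hx
    refine ⟨Sface_subset hx, fun y hy => ?_⟩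
    rw [dot_on_Sface hx]
    exact dot_on_AssIII ha hy


/-- Span of the difference vectors of maximizer sets. -/
noncomputable def Wspan (w : Fin (n+1) → ℝ) : Submodule ℝ (Fin (n+1) → ℝ) :=
  Submodule.span ℝ {z | ∃ p ∈ pairIdx n, ∃ k ∈ Mw w p, ∃ l ∈ Mw w p, z = eVec k - eVec l}

lemma hull_diff_mem {w : Fin (n+1) → ℝ} {p : Fin (n+1) × Fin (n+1)} (hp : p ∈ pairIdx n)
    {g g' : Fin (n+1) → ℝ}
    (hg : g ∈ convexHull ℝ (↑((Mw w p).image eVec) : Set (Fin (n+1) → ℝ)))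
    (hg' : g' ∈ convexHull ℝ (↑((Mw w p).image eVec) : Set (Fin (n+1) → ℝ))) :
    g - g' ∈ Wspan (n := n) w := by
  obtain ⟨c, hc0, hc1, rfl⟩ := mem_hull_eVec_iff.1 hg
  obtain ⟨c', hc0', hc1', rfl⟩ := mem_hull_eVec_iff.1 hg'
  have hrw : (∑ k ∈ Mw w p, c k • eVec k) - (∑ k ∈ Mw w p, c' k • eVec k) =
      ∑ k ∈ Mw w p, (c k - c' k) • (eVec k - eVec (pick w p)) := by
    rw [← Finset.sum_sub_distrib]
    have : ∀ k ∈ Mw w p, c k • eVec k - c' k • eVec k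
        = (c k - c' k) • (eVec k - eVec (pick w p)) + (c k - c' k) • eVec (pick w p) := by
      intro k _
      rw [smul_sub, sub_smul, sub_smul]
      abel
    rw [Finset.sum_congr rfl this, Finset.sum_add_distrib, ← Finset.sum_smul,
      Finset.sum_sub_distrib, hc1, hc1', sub_self, zero_smul, add_zero]
  rw [hrw]
  apply Submodule.sum_mem
  intro k hk
  apply Submodule.smul_mem
  exact Submodule.subset_span ⟨p, hp, k, hk, pick w p, pick_mem (mem_pairIdx.1 hp), rfl⟩

lemma spanDiff_Sface {a : Fin (n+1) × Fin (n+1) → ℝ}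
    (ha : ∀ p : Fin (n+1) × Fin (n+1), p.1 ≤ p.2 → 0 < a p) (w : Fin (n+1) → ℝ) :
    spanDiff (Sface a w) = Wspan (n := n) w := by
  apply le_antisymm
  · apply Submodule.span_le.2
    rintro z ⟨u, ⟨g, hg, rfl⟩, v, ⟨g', hg', rfl⟩, rfl⟩
    have : (∑ p ∈ pairIdx n, a p • g p) - (∑ p ∈ pairIdx n, a p • g' p)
        = ∑ p ∈ pairIdx n, a p • (g p - g' p) := by
      rw [← Finset.sum_sub_distrib]
      exact Finset.sum_congr rfl (fun p _ => (smul_sub _ _ _).symm)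
    rw [this]
    exact Submodule.sum_mem _ (fun p hp => Submodule.smul_mem _ _
      (hull_diff_mem hp (hg p hp) (hg' p hp)))
  · apply Submodule.span_le.2
    rintro z ⟨p, hp, k, hk, l, hl, rfl⟩
    set g : (Fin (n+1) × Fin (n+1)) → (Fin (n+1) → ℝ) :=
      Function.update (fun q => eVec (pick w q)) p (eVec k) with hgdef
    set g' : (Fin (n+1) × Fin (n+1)) → (Fin (n+1) → ℝ) :=
      Function.update (fun q => eVec (pick w q)) p (eVec l) with hgdef'
    have hmem : ∀ q ∈ pairIdx n, g q ∈ convexHull ℝ (↑((Mw w q).image eVec) : Set (Fin (n+1) → ℝ)) := by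
      intro q hq
      by_cases h : q = p
      · subst h
        rw [hgdef, Function.update_self]
        exact subset_convexHull ℝ _ (Finset.mem_coe.2 (Finset.mem_image_of_mem _ hk))
      · rw [hgdef, Function.update_of_ne h]
        exact subset_convexHull ℝ _ (Finset.mem_coe.2 (Finset.mem_image_of_mem _
          (pick_mem (mem_pairIdx.1 hq))))
    have hmem' : ∀ q ∈ pairIdx n, g' q ∈ convexHull ℝ (↑((Mw w q).image eVec) : Set (Fin (n+1) → ℝ)) := by
      intro q hq
      by_cases h : q = p
      · subst h
        rw [hgdef', Function.update_self]
        exact subset_convexHull ℝ _ (Finset.mem_coe.2 (Finset.mem_image_of_mem _ hl))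
      · rw [hgdef', Function.update_of_ne h]
        exact subset_convexHull ℝ _ (Finset.mem_coe.2 (Finset.mem_image_of_mem _
          (pick_mem (mem_pairIdx.1 hq))))
    have hxdiff : (∑ q ∈ pairIdx n, a q • g q) - (∑ q ∈ pairIdx n, a q • g' q)
        = a p • (eVec k - eVec l) := by
      rw [← Finset.sum_sub_distrib]
      rw [Finset.sum_eq_single_of_mem p hp]
      · rw [hgdef, hgdef', Function.update_self, Function.update_self, ← smul_sub]
      · intro q _ hq
        rw [hgdef, hgdef', Function.update_of_ne hq, Function.update_of_ne hq, sub_self]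
    have hap : a p ≠ 0 := ne_of_gt (ha p (mem_pairIdx.1 hp))
    have : eVec k - eVec l = (a p)⁻¹ • ((∑ q ∈ pairIdx n, a q • g q) - (∑ q ∈ pairIdx n, a q • g' q)) := by
      rw [hxdiff, smul_smul, inv_mul_cancel₀ hap, one_smul]
    rw [this]
    apply Submodule.smul_mem
    apply Submodule.subset_span
    exact ⟨_, ⟨g, hmem, rfl⟩, _, ⟨g', hmem', rfl⟩, rfl⟩

/-- Linear map computing block sums of coordinates. -/
noncomputable def blockMap {r : ℕ} (C : Fin r → Finset (Fin (n+1))) :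
    (Fin (n+1) → ℝ) →ₗ[ℝ] (Fin r → ℝ) where
  toFun x := fun i => ∑ k ∈ C i, x k
  map_add' x y := by funext i; exact Finset.sum_add_distrib
  map_smul' c x := by funext i; simp [Finset.mul_sum]

lemma blockMap_apply {r : ℕ} {C : Fin r → Finset (Fin (n+1))} {x : Fin (n+1) → ℝ} {i : Fin r} :
    blockMap C x i = ∑ k ∈ C i, x k := rfl

lemma blockMap_eVec {r : ℕ} {C : Fin r → Finset (Fin (n+1))} {t : Fin (n+1)} {i : Fin r} :
    blockMap C (eVec t) i = if t ∈ C i then (1:ℝ) else 0 := by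
  rw [blockMap_apply]
  exact Finset.sum_pi_single' t 1 (C i)

lemma mem_ker_blockMap {r : ℕ} {C : Fin r → Finset (Fin (n+1))} {x : Fin (n+1) → ℝ} :
    x ∈ LinearMap.ker (blockMap C) ↔ ∀ i, ∑ k ∈ C i, x k = 0 := by
  rw [LinearMap.mem_ker, funext_iff]
  exact Iff.rfl

lemma x_eq_sum_eVec (x : Fin (n+1) → ℝ) : x = ∑ k, x k • eVec k := by
  funext i
  rw [Finset.sum_apply]
  rw [Finset.sum_eq_single i]
  · simp [eVec_apply]
  · intro k _ hk
    simp [eVec_apply, hk]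
  · simp

lemma finrank_ker_blockMap {r : ℕ} {C : Fin r → Finset (Fin (n+1))}
    (hC : ∀ i, (C i).Nonempty) (hdisj : ∀ i j, i ≠ j → Disjoint (C i) (C j)) :
    Module.finrank ℝ (LinearMap.ker (blockMap C)) = n + 1 - r := by
  have hsurj : Function.Surjective (blockMap C) := by
    intro y
    refine ⟨∑ i, y i • eVec ((hC i).choose), ?_⟩
    funext j
    rw [blockMap_apply]
    have : ∀ k, (∑ i, y i • eVec ((hC i).choose)) k = ∑ i, y i * eVec ((hC i).choose) k := by
      intro k; rw [Finset.sum_apply]; rfl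
    rw [Finset.sum_congr rfl (fun k _ => this k), Finset.sum_comm]
    have : ∀ i : Fin r, ∑ k ∈ C j, y i * eVec ((hC i).choose) k
        = if (hC i).choose ∈ C j then y i else 0 := by
      intro i
      rw [← Finset.mul_sum]
      rw [show (∑ k ∈ C j, eVec ((hC i).choose) k) = if (hC i).choose ∈ C j then (1:ℝ) else 0 from
        Finset.sum_pi_single' _ 1 _]
      split <;> simp
    rw [Finset.sum_congr rfl (fun i _ => this i)]
    rw [Finset.sum_eq_single j]
    · rw [if_pos (hC j).choose_spec]
    · intro i _ hij
      rw [if_neg]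
      intro hmem
      exact (Finset.disjoint_left.1 (hdisj i j hij) (hC i).choose_spec) hmem
    · simp
  have hrank := LinearMap.finrank_range_add_finrank_ker (blockMap (n := n) C)
  rw [LinearMap.range_eq_top.2 hsurj] at hrank
  rw [finrank_top] at hrank
  have h1 : Module.finrank ℝ (Fin r → ℝ) = r := by simp
  have h2 : Module.finrank ℝ (Fin (n+1) → ℝ) = n + 1 := by simp
  rw [h1, h2] at hrank
  omega

lemma Wspan_le_ker {w : Fin (n+1) → ℝ} {r : ℕ} {C : Fin r → Finset (Fin (n+1))}
    (hcompat : ∀ p ∈ pairIdx n, ∀ k ∈ Mw w p, ∀ l ∈ Mw w p, ∀ i, (k ∈ C i ↔ l ∈ C i)) :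
    Wspan (n := n) w ≤ LinearMap.ker (blockMap C) := by
  apply Submodule.span_le.2
  rintro z ⟨p, hp, k, hk, l, hl, rfl⟩
  rw [SetLike.mem_coe, LinearMap.mem_ker, map_sub]
  funext i
  rw [Pi.sub_apply, blockMap_eVec, blockMap_eVec, Pi.zero_apply]
  by_cases h : k ∈ C i
  · rw [if_pos h, if_pos ((hcompat p hp k hk l hl i).1 h), sub_self]
  · rw [if_neg h, if_neg (fun hh => h ((hcompat p hp k hk l hl i).2 hh)), sub_self]

lemma ker_le_Wspan {w : Fin (n+1) → ℝ} {r : ℕ} {C : Fin r → Finset (Fin (n+1))}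
    (hC : ∀ i, (C i).Nonempty)
    (hdisj : ∀ i j, i ≠ j → Disjoint (C i) (C j))
    (hcover : ∀ k, ∃ i, k ∈ C i)
    (hpairs : ∀ i, ∀ k ∈ C i, ∀ l ∈ C i, ∃ p ∈ pairIdx n, k ∈ Mw w p ∧ l ∈ Mw w p) :
    LinearMap.ker (blockMap C) ≤ Wspan (n := n) w := by
  intro x hx
  rw [mem_ker_blockMap] at hx
  have huniv : (Finset.univ : Finset (Fin (n+1))) = Finset.univ.biUnion C := by
    ext k
    simp only [Finset.mem_univ, Finset.mem_biUnion, true_iff]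
    obtain ⟨i, hi⟩ := hcover k
    exact ⟨i, trivial, hi⟩
  have hrep := x_eq_sum_eVec x
  rw [huniv, Finset.sum_biUnion (fun i _ j _ hij => hdisj i j hij)] at hrep
  rw [hrep]
  apply Submodule.sum_mem
  intro i _
  have hblock : ∑ k ∈ C i, x k • eVec k
      = ∑ k ∈ C i, x k • (eVec k - eVec ((hC i).choose)) := by
    have : ∀ k ∈ C i, x k • eVec k
        = x k • (eVec k - eVec ((hC i).choose)) + x k • eVec ((hC i).choose) := by
      intro k _
      rw [smul_sub]; abel
    rw [Finset.sum_congr rfl this, Finset.sum_add_distrib, ← Finset.sum_smul, hx i, zero_smul,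
      add_zero]
  rw [hblock]
  apply Submodule.sum_mem
  intro k hk
  apply Submodule.smul_mem
  obtain ⟨p, hp, hkp, hlp⟩ := hpairs i k hk ((hC i).choose) (hC i).choose_spec
  exact Submodule.subset_span ⟨p, hp, k, hkp, _, hlp, rfl⟩


lemma sum_coords_eq_dot_ones {x : Fin (n+1) → ℝ} : ∑ i, x i = dot (fun _ => (1:ℝ)) x := by
  simp [dot]

lemma sum_coords_of_mem {a : Fin (n+1) × Fin (n+1) → ℝ} {x : Fin (n+1) → ℝ}
    (hx : x ∈ AssIII n a) : ∑ i, x i = ∑ p ∈ pairIdx n, a p := by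
  obtain ⟨f, hf, rfl⟩ := hx
  rw [sum_coords_eq_dot_ones, dot_sum]
  apply Finset.sum_congr rfl
  intro p hp
  rw [dot_smul]
  have hfp := hf p hp
  rw [stdSimplexSeg_eq] at hfp
  rw [dot_eq_of_hull (fun k _ => rfl) hfp, mul_one]

lemma maxFace_zero {a : Fin (n+1) × Fin (n+1) → ℝ} :
    maxFace (AssIII n a) (0 : Fin (n+1) → ℝ) = AssIII n a := by
  ext x
  constructor
  · exact fun h => h.1
  · intro h
    refine ⟨h, fun y _ => ?_⟩
    simp [dot]

lemma Mw_zero {q : Fin (n+1) × Fin (n+1)} : Mw (0 : Fin (n+1) → ℝ) q = Finset.Icc q.1 q.2 := by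
  ext k
  rw [mem_Mw]
  simp

lemma dimOf_AssIII {a : Fin (n+1) × Fin (n+1) → ℝ}
    (ha : ∀ p : Fin (n+1) × Fin (n+1), p.1 ≤ p.2 → 0 < a p) : dimOf (AssIII n a) = n := by
  have h1 : AssIII n a = Sface a (0 : Fin (n+1) → ℝ) := by
    rw [← maxFace_zero (a := a), maxFace_eq_Sface ha]
  have h2 : spanDiff (AssIII n a) = Wspan (n := n) 0 := by
    rw [h1, spanDiff_Sface ha]
  have h3 : Wspan (n := n) (0 : Fin (n+1) → ℝ)
      = LinearMap.ker (blockMap (fun _ : Fin 1 => (Finset.univ : Finset (Fin (n+1))))) := by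
    apply le_antisymm
    · exact Wspan_le_ker (fun p hp k hk l hl i => by simp)
    · apply ker_le_Wspan
      · intro i; exact ⟨0, Finset.mem_univ 0⟩
      · intro i j hij; exact absurd (Subsingleton.elim i j) hij
      · intro k; exact ⟨0, Finset.mem_univ k⟩
      · intro i k _ l _
        refine ⟨(k ⊓ l, k ⊔ l), mem_pairIdx.2 inf_le_sup, ?_, ?_⟩ <;>
          · rw [Mw_zero, Finset.mem_Icc]
            constructor
            · first | exact inf_le_left | exact inf_le_right
            · first | exact le_sup_left | exact le_sup_right
  rw [dimOf, h2, h3, finrank_ker_blockMap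
    (fun i => ⟨0, Finset.mem_univ 0⟩) (fun i j hij => absurd (Subsingleton.elim i j) hij)]
  omega


/-- The functional `-1` on the interval `[p.1, p.2]`, `0` elsewhere. -/
def uJ (p : Fin (n+1) × Fin (n+1)) : Fin (n+1) → ℝ :=
  fun k => if k ∈ Finset.Icc p.1 p.2 then (-1:ℝ) else 0

lemma uJ_nonpos {p : Fin (n+1) × Fin (n+1)} {k : Fin (n+1)} : uJ p k ≤ 0 := by
  unfold uJ; split <;> norm_num

lemma Mw_uJ {p q : Fin (n+1) × Fin (n+1)} :
    Mw (uJ p) q = if Finset.Icc q.1 q.2 ⊆ Finset.Icc p.1 p.2 then Finset.Icc q.1 q.2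
      else Finset.Icc q.1 q.2 \ Finset.Icc p.1 p.2 := by
  by_cases h : Finset.Icc q.1 q.2 ⊆ Finset.Icc p.1 p.2
  · rw [if_pos h]
    ext k
    rw [mem_Mw]
    constructor
    · exact fun hk => hk.1
    · intro hk
      refine ⟨hk, fun l hl => ?_⟩
      rw [uJ, uJ, if_pos (h hk), if_pos (h hl)]
  · rw [if_neg h]
    obtain ⟨k₀, hk₀q, hk₀p⟩ := Finset.not_subset.1 h
    ext k
    rw [mem_Mw, Finset.mem_sdiff]
    constructor
    · rintro ⟨hkq, hmax⟩
      refine ⟨hkq, fun hkp => ?_⟩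
      have h1 := hmax k₀ hk₀q
      rw [uJ, uJ, if_pos hkp, if_neg hk₀p] at h1
      linarith
    · rintro ⟨hkq, hkp⟩
      refine ⟨hkq, fun l hl => ?_⟩
      have h1 : uJ p k = 0 := by simp [uJ, hkp]
      rw [h1]
      exact uJ_nonpos

lemma Icc_zero_last : Finset.Icc (0 : Fin (n+1)) (Fin.last n) = Finset.univ := by
  ext k
  simp [Finset.mem_Icc, Fin.zero_le, Fin.le_last]

lemma exists_not_mem_Icc {p : Fin (n+1) × Fin (n+1)}
    (hproper : ¬(p.1 = 0 ∧ p.2 = Fin.last n)) : ∃ t, t ∉ Finset.Icc p.1 p.2 := by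
  by_cases h1 : p.1 = 0
  · refine ⟨Fin.last n, fun hmem => ?_⟩
    rw [Finset.mem_Icc] at hmem
    exact hproper ⟨h1, le_antisymm (Fin.le_last _) hmem.2⟩
  · refine ⟨0, fun hmem => ?_⟩
    rw [Finset.mem_Icc] at hmem
    exact h1 (le_antisymm hmem.1 (Fin.zero_le _))

/-- Two blocks: the complement of the interval, and the interval. -/
def C2 (p : Fin (n+1) × Fin (n+1)) : Fin 2 → Finset (Fin (n+1)) :=
  fun i => if i = 0 then Finset.univ \ Finset.Icc p.1 p.2 else Finset.Icc p.1 p.2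

lemma C2_nonempty {p : Fin (n+1) × Fin (n+1)} (hp : p.1 ≤ p.2)
    (hproper : ¬(p.1 = 0 ∧ p.2 = Fin.last n)) : ∀ i, (C2 p i).Nonempty := by
  intro i
  by_cases h : i = 0
  · obtain ⟨t, ht⟩ := exists_not_mem_Icc hproper
    exact ⟨t, by rw [C2, if_pos h, Finset.mem_sdiff]; exact ⟨Finset.mem_univ t, ht⟩⟩
  · exact ⟨p.1, by rw [C2, if_neg h, Finset.mem_Icc]; exact ⟨le_refl _, hp⟩⟩

lemma C2_disjoint {p : Fin (n+1) × Fin (n+1)} :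
    ∀ i j, i ≠ j → Disjoint (C2 p i) (C2 p j) := by
  intro i j hij
  by_cases hi : i = 0
  · have hj : ¬ j = 0 := fun h => hij (by rw [hi, h])
    rw [C2, C2, if_pos hi, if_neg hj]
    exact Finset.sdiff_disjoint
  · have hj : j = 0 := by omega
    rw [C2, C2, if_neg hi, if_pos hj]
    exact Finset.sdiff_disjoint.symm

lemma mem_C2_iff {p : Fin (n+1) × Fin (n+1)} {k : Fin (n+1)} {i : Fin 2} :
    k ∈ C2 p i ↔ (if i = 0 then k ∉ Finset.Icc p.1 p.2 else k ∈ Finset.Icc p.1 p.2) := by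
  by_cases h : i = 0 <;> simp [C2, h]

lemma Wspan_uJ_eq {p : Fin (n+1) × Fin (n+1)} (hp : p.1 ≤ p.2)
    (hproper : ¬(p.1 = 0 ∧ p.2 = Fin.last n)) :
    Wspan (n := n) (uJ p) = LinearMap.ker (blockMap (C2 p)) := by
  apply le_antisymm
  · apply Wspan_le_ker
    intro q hq k hk l hl i
    rw [Mw_uJ] at hk hl
    rw [mem_C2_iff, mem_C2_iff]
    by_cases h : Finset.Icc q.1 q.2 ⊆ Finset.Icc p.1 p.2
    · rw [if_pos h] at hk hl
      by_cases hi : i = 0 <;> simp only [hi, if_pos, if_neg, if_true, if_false, reduceIte]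
      · simp [h hk, h hl]
      · simp [h hk, h hl]
    · rw [if_neg h] at hk hl
      rw [Finset.mem_sdiff] at hk hl
      by_cases hi : i = 0 <;> simp only [hi, reduceIte]
      · simp [hk.2, hl.2]
      · simp [hk.2, hl.2]
  · apply ker_le_Wspan (C2_nonempty hp hproper) C2_disjoint
    · intro k
      by_cases h : k ∈ Finset.Icc p.1 p.2
      · exact ⟨1, by rw [mem_C2_iff]; simpa using h⟩
      · exact ⟨0, by rw [mem_C2_iff]; simpa using h⟩
    · intro i k hk l hl
      refine ⟨(k ⊓ l, k ⊔ l), mem_pairIdx.2 inf_le_sup, ?_⟩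
      rw [mem_C2_iff] at hk hl
      by_cases hi : i = 0
      · rw [if_pos hi] at hk hl
        have hns : ¬ (Finset.Icc ((k ⊓ l, k ⊔ l) : Fin (n+1) × Fin (n+1)).1 ((k ⊓ l, k ⊔ l) : Fin (n+1) × Fin (n+1)).2 ⊆ Finset.Icc p.1 p.2) := by
          intro hsub
          exact hk (hsub (Finset.mem_Icc.2 ⟨inf_le_left, le_sup_left⟩))
        rw [Mw_uJ, if_neg hns]
        constructor
        · rw [Finset.mem_sdiff]
          exact ⟨Finset.mem_Icc.2 ⟨inf_le_left, le_sup_left⟩, hk⟩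
        · rw [Finset.mem_sdiff]
          exact ⟨Finset.mem_Icc.2 ⟨inf_le_right, le_sup_right⟩, hl⟩
      · rw [if_neg hi] at hk hl
        have hs : Finset.Icc ((k ⊓ l, k ⊔ l) : Fin (n+1) × Fin (n+1)).1 ((k ⊓ l, k ⊔ l) : Fin (n+1) × Fin (n+1)).2 ⊆ Finset.Icc p.1 p.2 := by
          intro t ht
          rw [Finset.mem_Icc] at ht ⊢
          rw [Finset.mem_Icc] at hk hl
          exact ⟨le_trans (le_inf hk.1 hl.1) ht.1, le_trans ht.2 (sup_le hk.2 hl.2)⟩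
        rw [Mw_uJ, if_pos hs]
        exact ⟨Finset.mem_Icc.2 ⟨inf_le_left, le_sup_left⟩,
          Finset.mem_Icc.2 ⟨inf_le_right, le_sup_right⟩⟩

lemma finrank_Wspan_uJ {p : Fin (n+1) × Fin (n+1)} (hp : p.1 ≤ p.2)
    (hproper : ¬(p.1 = 0 ∧ p.2 = Fin.last n)) :
    Module.finrank ℝ (Wspan (n := n) (uJ p)) = n - 1 := by
  rw [Wspan_uJ_eq hp hproper, finrank_ker_blockMap (C2_nonempty hp hproper) C2_disjoint]
  omega


lemma blocks_card_le {r : ℕ} {C : Fin r → Finset (Fin (n+1))}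
    (hC : ∀ i, (C i).Nonempty) (hdisj : ∀ i j, i ≠ j → Disjoint (C i) (C j)) : r ≤ n + 1 := by
  have h1 : (Finset.univ.biUnion C).card = ∑ i, (C i).card :=
    Finset.card_biUnion (fun i _ j _ hij => hdisj i j hij)
  have h2 : (Finset.univ.biUnion C).card ≤ n + 1 := by
    calc (Finset.univ.biUnion C).card ≤ (Finset.univ : Finset (Fin (n+1))).card :=
          Finset.card_le_card (Finset.subset_univ _)
      _ = n + 1 := by simp
  have h3 : r ≤ ∑ i, (C i).card := by
    calc r = ∑ _i : Fin r, 1 := by simp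
      _ ≤ ∑ i, (C i).card := Finset.sum_le_sum (fun i _ => Finset.card_pos.2 (hC i))
  omega

lemma rank_le_blocks {u : Fin (n+1) → ℝ} {r : ℕ} {C : Fin r → Finset (Fin (n+1))}
    (hC : ∀ i, (C i).Nonempty) (hdisj : ∀ i j, i ≠ j → Disjoint (C i) (C j))
    (hcompat : ∀ p ∈ pairIdx n, ∀ k ∈ Mw u p, ∀ l ∈ Mw u p, ∀ i, (k ∈ C i ↔ l ∈ C i)) :
    Module.finrank ℝ (Wspan (n := n) u) ≤ n + 1 - r ∧ r ≤ n + 1 :=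
  ⟨le_trans (Submodule.finrank_mono (Wspan_le_ker hcompat))
    (le_of_eq (finrank_ker_blockMap hC hdisj)), blocks_card_le hC hdisj⟩

open Classical in
lemma facet_structure {u : Fin (n+1) → ℝ} (hn : 1 ≤ n)
    (hrank : Module.finrank ℝ (Wspan (n := n) u) = n - 1) :
    ∃ p : Fin (n+1) × Fin (n+1), p.1 ≤ p.2 ∧ ¬(p.1 = 0 ∧ p.2 = Fin.last n) ∧
      ∀ q : Fin (n+1) × Fin (n+1), Mw u q = Mw (uJ p) q := by
  set A : Finset (Fin (n+1)) := Finset.univ.filter (fun k => ∀ l, u l ≤ u k) with hAdef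
  have hA : A.Nonempty := by
    obtain ⟨b, _, hb⟩ := Finset.exists_max_image Finset.univ u ⟨0, Finset.mem_univ 0⟩
    exact ⟨b, Finset.mem_filter.2 ⟨Finset.mem_univ b, fun l => hb l (Finset.mem_univ l)⟩⟩
  obtain ⟨a₀, ha₀⟩ := hA
  have ha₀max : ∀ l, u l ≤ u a₀ := (Finset.mem_filter.1 ha₀).2
  have hmemA : ∀ k, k ∈ A ↔ u k = u a₀ := by
    intro k
    constructor
    · exact fun hk => le_antisymm (ha₀max k) ((Finset.mem_filter.1 hk).2 a₀)
    · exact fun hk => Finset.mem_filter.2 ⟨Finset.mem_univ _, fun l => hk ▸ ha₀max l⟩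
  have hAne : A ≠ Finset.univ := by
    intro hAu
    have hconst : ∀ k l : Fin (n+1), u l ≤ u k := by
      intro k l
      have : k ∈ A := hAu ▸ Finset.mem_univ k
      exact (Finset.mem_filter.1 this).2 l
    have hMw : ∀ q : Fin (n+1) × Fin (n+1), Mw u q = Finset.Icc q.1 q.2 := by
      intro q
      ext k
      rw [mem_Mw]
      exact ⟨fun hk => hk.1, fun hk => ⟨hk, fun l _ => hconst k l⟩⟩
    have hW : Wspan (n := n) u
        = LinearMap.ker (blockMap (fun _ : Fin 1 => (Finset.univ : Finset (Fin (n+1))))) := by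
      apply le_antisymm
      · exact Wspan_le_ker (fun p hp k hk l hl i => by simp)
      · apply ker_le_Wspan
        · intro i; exact ⟨0, Finset.mem_univ 0⟩
        · intro i j hij; exact absurd (Subsingleton.elim i j) hij
        · intro k; exact ⟨0, Finset.mem_univ k⟩
        · intro i k _ l _
          refine ⟨(k ⊓ l, k ⊔ l), mem_pairIdx.2 inf_le_sup, ?_, ?_⟩ <;>
            · rw [hMw, Finset.mem_Icc]
              constructor
              · first | exact inf_le_left | exact inf_le_right
              · first | exact le_sup_left | exact le_sup_right
    rw [hW, finrank_ker_blockMap (fun i => ⟨0, Finset.mem_univ 0⟩)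
      (fun i j hij => absurd (Subsingleton.elim i j) hij)] at hrank
    omega
  have hBne : (Finset.univ \ A).Nonempty := by
    rw [Finset.sdiff_nonempty]
    intro hsub
    exact hAne (Finset.Subset.antisymm (Finset.subset_univ A) hsub)
  set B : Finset (Fin (n+1)) := Finset.univ \ A with hBdef
  obtain ⟨b₀, hb₀⟩ := hBne
  have hmemB : ∀ k, k ∈ B ↔ k ∉ A := by
    intro k; rw [hBdef, Finset.mem_sdiff]; simp
  have hBlt : ∀ k ∈ B, u k < u a₀ := by
    intro k hk
    exact lt_of_le_of_ne (ha₀max k) (fun h => ((hmemB k).1 hk) ((hmemA k).2 h))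
  have hABdisj : Disjoint A B := by
    rw [hBdef]; exact Finset.disjoint_sdiff
  have hAB : ∀ k : Fin (n+1), k ∈ A ∨ k ∈ B := by
    intro k
    by_cases h : k ∈ A
    · exact Or.inl h
    · exact Or.inr ((hmemB k).2 h)
  -- two-valued
  have htwo : ∀ k ∈ B, u k = u b₀ := by
    intro k hk
    by_contra hne
    have hba : u b₀ ≠ u a₀ := fun h => ((hmemB b₀).1 hb₀) ((hmemA b₀).2 h)
    have hka : u k ≠ u a₀ := fun h => ((hmemB k).1 hk) ((hmemA k).2 h)
    set vals : Fin 3 → ℝ := fun i => if i = 0 then u a₀ else if i = 1 then u b₀ else u k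
      with hvals
    set C3 : Fin 3 → Finset (Fin (n+1)) := fun i => Finset.univ.filter (fun t => u t = vals i)
      with hC3
    have hv0 : vals 0 = u a₀ := by simp [hvals]
    have hv1 : vals 1 = u b₀ := by simp [hvals]
    have hv2 : vals 2 = u k := by simp [hvals]
    have hvne : ∀ i j : Fin 3, i ≠ j → vals i ≠ vals j := by
      intro i j hij
      fin_cases i <;> fin_cases j <;>
        simp only [hv0, hv1, hv2] <;>
        first
          | exact absurd rfl hij
          | exact fun h => hba h.symm
          | exact fun h => hka h.symm
          | exact hba
          | exact hka
          | exact hne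
          | exact fun h => hne h.symm
    have hC3mem : ∀ i t, t ∈ C3 i ↔ u t = vals i := by
      intro i t; rw [hC3]; simp
    have hC3ne : ∀ i, (C3 i).Nonempty := by
      intro i
      fin_cases i
      · exact ⟨a₀, (hC3mem _ _).2 (by simp [hvals])⟩
      · exact ⟨b₀, (hC3mem _ _).2 (by simp [hvals])⟩
      · exact ⟨k, (hC3mem _ _).2 (by simp [hvals])⟩
    have hC3disj : ∀ i j, i ≠ j → Disjoint (C3 i) (C3 j) := by
      intro i j hij
      rw [Finset.disjoint_left]
      intro t ht1 ht2
      rw [hC3mem] at ht1 ht2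
      exact hvne i j hij (ht1 ▸ ht2)
    have hcompat : ∀ p ∈ pairIdx n, ∀ k' ∈ Mw u p, ∀ l' ∈ Mw u p, ∀ i,
        (k' ∈ C3 i ↔ l' ∈ C3 i) := by
      intro p hp k' hk' l' hl' i
      rw [hC3mem, hC3mem, w_eq_on_Mw hk' hl']
    obtain ⟨hr1, hr2⟩ := rank_le_blocks hC3ne hC3disj hcompat
    omega
  -- no pattern b < a < b'
  have hpat : ∀ b' a' b'' : Fin (n+1), b' ∈ B → a' ∈ A → b'' ∈ B → b' < a' → a' < b'' → False := by
    intro b' a' b'' hb' ha' hb'' hlt1 hlt2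
    set C3' : Fin 3 → Finset (Fin (n+1)) := fun i =>
      if i = 0 then A else if i = 1 then B.filter (· < a') else B.filter (a' < ·) with hC3'
    have hC3'ne : ∀ i, (C3' i).Nonempty := by
      intro i
      fin_cases i
      · exact ⟨a₀, ha₀⟩
      · exact ⟨b', by rw [hC3']; simp only [reduceIte]; exact Finset.mem_filter.2 ⟨hb', hlt1⟩⟩
      · exact ⟨b'', by rw [hC3']; simp only [reduceIte]; exact Finset.mem_filter.2 ⟨hb'', hlt2⟩⟩
    have hm0 : ∀ t, t ∈ C3' (0 : Fin 3) ↔ t ∈ A := fun t => Iff.rfl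
    have hm1 : ∀ t, t ∈ C3' (1 : Fin 3) ↔ t ∈ B ∧ t < a' := fun t => Finset.mem_filter
    have hm2 : ∀ t, t ∈ C3' (2 : Fin 3) ↔ t ∈ B ∧ a' < t := fun t => Finset.mem_filter
    have hAB' : ∀ t, t ∈ A → t ∈ B → False := fun t h1 h2 => (hmemB t).1 h2 h1
    have hC3'disj : ∀ i j, i ≠ j → Disjoint (C3' i) (C3' j) := by
      intro i j hij
      rw [Finset.disjoint_left]
      intro t hti htj
      fin_cases i <;> fin_cases j <;>
        first
          | exact absurd rfl hij
          | exact hAB' t ((hm0 t).1 hti) ((hm1 t).1 htj).1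
          | exact hAB' t ((hm0 t).1 hti) ((hm2 t).1 htj).1
          | exact hAB' t ((hm0 t).1 htj) ((hm1 t).1 hti).1
          | exact hAB' t ((hm0 t).1 htj) ((hm2 t).1 hti).1
          | exact absurd ((hm2 t).1 htj).2 (not_lt.2 (le_of_lt ((hm1 t).1 hti).2))
          | exact absurd ((hm2 t).1 hti).2 (not_lt.2 (le_of_lt ((hm1 t).1 htj).2))
    have hcompat : ∀ p ∈ pairIdx n, ∀ k' ∈ Mw u p, ∀ l' ∈ Mw u p, ∀ i,
        (k' ∈ C3' i ↔ l' ∈ C3' i) := by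
      intro p hp k' hk' l' hl' i
      have hueq := w_eq_on_Mw hk' hl'
      have hAiff : (k' ∈ A ↔ l' ∈ A) := by rw [hmemA, hmemA, hueq]
      by_cases hcase : k' ∈ A
      · have hl'A : l' ∈ A := hAiff.1 hcase
        have hkB2 : k' ∉ B := fun h => hAB' k' hcase h
        have hlB2 : l' ∉ B := fun h => hAB' l' hl'A h
        fin_cases i
        · exact (hm0 k').trans (hAiff.trans (hm0 l').symm)
        · exact (hm1 k').trans (Iff.trans
            ⟨fun h => absurd h.1 hkB2, fun h => absurd h.1 hlB2⟩ (hm1 l').symm)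
        · exact (hm2 k').trans (Iff.trans
            ⟨fun h => absurd h.1 hkB2, fun h => absurd h.1 hlB2⟩ (hm2 l').symm)
      · have hl'B : l' ∉ A := fun h => hcase (hAiff.2 h)
        have hk'B : k' ∈ B := (hmemB k').2 hcase
        have hl'B' : l' ∈ B := (hmemB l').2 hl'B
        -- a' not in Icc q
        have ha'not : a' ∉ Finset.Icc p.1 p.2 := by
          intro hmem
          have h1 : u a' ≤ u k' := (mem_Mw.1 hk').2 a' hmem
          have h2 : u a' = u a₀ := (hmemA a').1 ha'
          have h3 : u k' < u a₀ := hBlt k' hk'B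
          linarith
        have hside : (k' < a' ↔ l' < a') := by
          constructor
          · intro hkl
            by_contra hnl
            have hal : a' < l' := by
              rcases lt_trichotomy a' l' with h | h | h
              · exact h
              · exact absurd (h ▸ (mem_Mw.1 hl').1) ha'not
              · exact absurd h hnl
            apply ha'not
            rw [Finset.mem_Icc]
            have hk'm := Finset.mem_Icc.1 (mem_Mw.1 hk').1
            have hl'm := Finset.mem_Icc.1 (mem_Mw.1 hl').1
            exact ⟨le_trans hk'm.1 (le_of_lt hkl), le_trans (le_of_lt hal) hl'm.2⟩
          · intro hkl
            by_contra hnl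
            have hal : a' < k' := by
              rcases lt_trichotomy a' k' with h | h | h
              · exact h
              · exact absurd (h ▸ (mem_Mw.1 hk').1) ha'not
              · exact absurd h hnl
            apply ha'not
            rw [Finset.mem_Icc]
            have hk'm := Finset.mem_Icc.1 (mem_Mw.1 hk').1
            have hl'm := Finset.mem_Icc.1 (mem_Mw.1 hl').1
            exact ⟨le_trans hl'm.1 (le_of_lt hkl), le_trans (le_of_lt hal) hk'm.2⟩
        have hside' : (a' < k' ↔ a' < l') := by
            constructor
            · intro h
              rcases lt_trichotomy a' l' with h1 | h1 | h1
              · exact h1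
              · exact absurd (h1 ▸ (mem_Mw.1 hl').1) ha'not
              · exact absurd (hside.2 h1) (not_lt.2 (le_of_lt h))
            · intro h
              rcases lt_trichotomy a' k' with h1 | h1 | h1
              · exact h1
              · exact absurd (h1 ▸ (mem_Mw.1 hk').1) ha'not
              · exact absurd (hside.1 h1) (not_lt.2 (le_of_lt h))
        fin_cases i
        · exact (hm0 k').trans (hAiff.trans (hm0 l').symm)
        · exact (hm1 k').trans (Iff.trans
            ⟨fun h => ⟨hl'B', hside.1 h.2⟩, fun h => ⟨hk'B, hside.2 h.2⟩⟩ (hm1 l').symm)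
        · exact (hm2 k').trans (Iff.trans
            ⟨fun h => ⟨hl'B', hside'.1 h.2⟩, fun h => ⟨hk'B, hside'.2 h.2⟩⟩ (hm2 l').symm)
    obtain ⟨hr1, hr2⟩ := rank_le_blocks hC3'ne hC3'disj hcompat
    omega
  -- B is an interval
  have hBne' : B.Nonempty := ⟨b₀, hb₀⟩
  set i0 : Fin (n+1) := B.min' hBne' with hi0
  set j0 : Fin (n+1) := B.max' hBne' with hj0
  have hij : i0 ≤ j0 := Finset.min'_le B j0 (Finset.max'_mem B hBne')
  have hBIcc : B = Finset.Icc i0 j0 := by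
    apply Finset.Subset.antisymm
    · intro k hk
      rw [Finset.mem_Icc]
      exact ⟨Finset.min'_le B k hk, Finset.le_max' B k hk⟩
    · intro k hk
      by_contra hkB
      have hkA : k ∈ A := (hAB k).resolve_right (fun h => hkB h)
      have hi0B : i0 ∈ B := Finset.min'_mem B hBne'
      have hj0B : j0 ∈ B := Finset.max'_mem B hBne'
      have hik : i0 < k := lt_of_le_of_ne (Finset.mem_Icc.1 hk).1
        (fun h => hkB (h ▸ hi0B))
      have hkj : k < j0 := lt_of_le_of_ne (Finset.mem_Icc.1 hk).2
        (fun h => hkB (h.symm ▸ hj0B))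
      exact hpat i0 k j0 hi0B hkA hj0B hik hkj
  have hproper : ¬(i0 = 0 ∧ j0 = Fin.last n) := by
    rintro ⟨h0, hl⟩
    have hBuniv : B = Finset.univ := by rw [hBIcc, h0, hl, Icc_zero_last]
    have : a₀ ∈ B := hBuniv ▸ Finset.mem_univ a₀
    exact ((hmemB a₀).1 this) ha₀
  refine ⟨(i0, j0), hij, hproper, ?_⟩
  intro q
  have hpair1 : Finset.Icc ((i0, j0) : Fin (n+1) × Fin (n+1)).1 ((i0, j0) : Fin (n+1) × Fin (n+1)).2 = B := hBIcc.symm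
  rw [Mw_uJ, hpair1]
  by_cases h : Finset.Icc q.1 q.2 ⊆ B
  · rw [if_pos h]
    ext k
    rw [mem_Mw]
    constructor
    · exact fun hk => hk.1
    · intro hk
      refine ⟨hk, fun l hl => ?_⟩
      rw [htwo l (h hl), htwo k (h hk)]
  · rw [if_neg h]
    obtain ⟨k₀, hk₀q, hk₀B⟩ := Finset.not_subset.1 h
    have hk₀A : k₀ ∈ A := (hAB k₀).resolve_right hk₀B
    ext k
    rw [mem_Mw, Finset.mem_sdiff]
    constructor
    · rintro ⟨hkq, hmax⟩
      refine ⟨hkq, fun hkB => ?_⟩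
      have h1 : u k₀ ≤ u k := hmax k₀ hk₀q
      have h2 : u k₀ = u a₀ := (hmemA k₀).1 hk₀A
      have h3 : u k < u a₀ := hBlt k hkB
      linarith
    · rintro ⟨hkq, hkB⟩
      have hkA : k ∈ A := (hAB k).resolve_right hkB
      exact ⟨hkq, fun l _ => (Finset.mem_filter.1 hkA).2 l⟩


lemma sum_eq_of_le {ι : Type*} {s : Finset ι} {f g : ι → ℝ}
    (hle : ∀ i ∈ s, f i ≤ g i) (hsum : ∑ i ∈ s, g i ≤ ∑ i ∈ s, f i) :
    ∀ i ∈ s, f i = g i := by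
  intro i hi
  by_contra hne
  have : ∑ i ∈ s, f i < ∑ i ∈ s, g i :=
    Finset.sum_lt_sum hle ⟨i, hi, lt_of_le_of_ne (hle i hi) hne⟩
  linarith

lemma Sface_congr {a : Fin (n+1) × Fin (n+1) → ℝ} {u u' : Fin (n+1) → ℝ}
    (h : ∀ q ∈ pairIdx n, Mw u q = Mw u' q) : Sface a u = Sface a u' := by
  ext x
  constructor
  · rintro ⟨g, hg, rfl⟩
    exact ⟨g, fun p hp => (h p hp) ▸ hg p hp, rfl⟩
  · rintro ⟨g, hg, rfl⟩
    exact ⟨g, fun p hp => (h p hp).symm ▸ hg p hp, rfl⟩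

lemma vertex_data {a : Fin (n+1) × Fin (n+1) → ℝ}
    (ha : ∀ p : Fin (n+1) × Fin (n+1), p.1 ≤ p.2 → 0 < a p) {v w : Fin (n+1) → ℝ}
    (hw : ({v} : Set (Fin (n+1) → ℝ)) = maxFace (AssIII n a) w) :
    (∀ p ∈ pairIdx n, Mw w p = {pick w p}) ∧
      v = ∑ p ∈ pairIdx n, a p • eVec (pick w p) := by
  have hS : Sface a w = {v} := by rw [← maxFace_eq_Sface ha, ← hw]
  have hsing : ∀ p ∈ pairIdx n, Mw w p = {pick w p} := by
    intro p hp
    have hp' := mem_pairIdx.1 hp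
    refine Finset.eq_singleton_iff_unique_mem.2 ⟨pick_mem hp', ?_⟩
    intro k hk
    by_contra hne
    set g : (Fin (n+1) × Fin (n+1)) → (Fin (n+1) → ℝ) := fun q => eVec (pick w q) with hgdef
    set g' : (Fin (n+1) × Fin (n+1)) → (Fin (n+1) → ℝ) := Function.update g p (eVec k)
      with hgdef'
    have hx : (∑ q ∈ pairIdx n, a q • g q) ∈ Sface a w :=
      ⟨g, fun q hq => subset_convexHull ℝ _
        (Finset.mem_coe.2 (Finset.mem_image_of_mem _ (pick_mem (mem_pairIdx.1 hq)))), rfl⟩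
    have hx' : (∑ q ∈ pairIdx n, a q • g' q) ∈ Sface a w := by
      refine ⟨g', fun q hq => ?_, rfl⟩
      by_cases h : q = p
      · subst h
        rw [hgdef', Function.update_self]
        exact subset_convexHull ℝ _ (Finset.mem_coe.2 (Finset.mem_image_of_mem _ hk))
      · rw [hgdef', Function.update_of_ne h]
        exact subset_convexHull ℝ _
          (Finset.mem_coe.2 (Finset.mem_image_of_mem _ (pick_mem (mem_pairIdx.1 hq))))
    rw [hS, Set.mem_singleton_iff] at hx hx'
    have hdiff : (∑ q ∈ pairIdx n, a q • g q) - (∑ q ∈ pairIdx n, a q • g' q)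
        = a p • (eVec (pick w p) - eVec k) := by
      rw [← Finset.sum_sub_distrib]
      rw [Finset.sum_eq_single_of_mem p hp]
      · rw [hgdef', Function.update_self, hgdef, ← smul_sub]
      · intro q _ hq
        rw [hgdef', Function.update_of_ne hq, sub_self]
    rw [hx, hx', sub_self] at hdiff
    have hap : a p ≠ 0 := ne_of_gt (ha p hp')
    have := (smul_eq_zero.1 hdiff.symm).resolve_left hap
    have := sub_eq_zero.1 this
    exact hne (eVec_injective this.symm)
  refine ⟨hsing, ?_⟩
  have hv : v ∈ Sface a w := by rw [hS]; exact rfl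
  obtain ⟨g, hg, hrep⟩ := hv
  rw [hrep]
  apply Finset.sum_congr rfl
  intro p hp
  have hmem := hg p hp
  rw [hsing p hp, Finset.image_singleton, Finset.coe_singleton, convexHull_singleton,
    Set.mem_singleton_iff] at hmem
  rw [hmem]

lemma vertex_in_face_iff {a : Fin (n+1) × Fin (n+1) → ℝ}
    (ha : ∀ p : Fin (n+1) × Fin (n+1), p.1 ≤ p.2 → 0 < a p) {w u : Fin (n+1) → ℝ} :
    (∑ p ∈ pairIdx n, a p • eVec (pick w p)) ∈ maxFace (AssIII n a) u ↔
      ∀ q ∈ pairIdx n, pick w q ∈ Mw u q := by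
  rw [maxFace_eq_Sface ha]
  constructor
  · intro hv
    have h1 := dot_on_Sface hv
    have h2 : dot u (∑ p ∈ pairIdx n, a p • eVec (pick w p))
        = ∑ q ∈ pairIdx n, a q * u (pick w q) := by
      rw [dot_sum]
      exact Finset.sum_congr rfl (fun q _ => by rw [dot_smul, dot_eVec])
    have hle : ∀ q ∈ pairIdx n, a q * u (pick w q) ≤ a q * u (pick u q) := by
      intro q hq
      have hq' := mem_pairIdx.1 hq
      exact mul_le_mul_of_nonneg_left
        ((mem_Mw.1 (pick_mem (w := u) hq')).2 _ (Mw_subset (pick_mem hq')))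
        (le_of_lt (ha q hq'))
    have heq := sum_eq_of_le hle (by rw [← h1, h2])
    intro q hq
    have hq' := mem_pairIdx.1 hq
    have hval : u (pick w q) = u (pick u q) :=
      mul_left_cancel₀ (ne_of_gt (ha q hq')) (heq q hq)
    rw [mem_Mw]
    refine ⟨Mw_subset (pick_mem hq'), fun l hl => ?_⟩
    rw [hval]
    exact (mem_Mw.1 (pick_mem (w := u) hq')).2 l hl
  · intro hmem
    exact ⟨fun q => eVec (pick w q), fun q hq => subset_convexHull ℝ _
      (Finset.mem_coe.2 (Finset.mem_image_of_mem _ (hmem q hq))), rfl⟩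


/-- Boundary condition: the values of `w` on the interval are dominated by the
values just outside it. -/
def bdry (w : Fin (n+1) → ℝ) (p : Fin (n+1) × Fin (n+1)) : Prop :=
  (∀ _ : 0 < p.1.val, ∀ k ∈ Finset.Icc p.1 p.2,
    w k < w ⟨p.1.val - 1, lt_of_le_of_lt (Nat.sub_le _ _) p.1.isLt⟩) ∧
  (∀ h : p.2.val < n, ∀ k ∈ Finset.Icc p.1 p.2, w k < w ⟨p.2.val + 1, by omega⟩)

lemma strict_max {w : Fin (n+1) → ℝ} (hsing : ∀ p ∈ pairIdx n, Mw w p = {pick w p})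
    {q : Fin (n+1) × Fin (n+1)} (hq : q ∈ pairIdx n) :
    ∀ k ∈ Finset.Icc q.1 q.2, k ≠ pick w q → w k < w (pick w q) := by
  intro k hkIcc hne
  have hk' : k ∉ Mw w q := by
    rw [hsing q hq]
    simp [hne]
  have hnotall : ¬ ∀ l ∈ Finset.Icc q.1 q.2, w l ≤ w k :=
    fun h => hk' (mem_Mw.2 ⟨hkIcc, h⟩)
  push_neg at hnotall
  obtain ⟨l, hl, hwl⟩ := hnotall
  exact lt_of_lt_of_le hwl ((mem_Mw.1 (pick_mem (mem_pairIdx.1 hq))).2 l hl)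

lemma mem_uJface_iff_bdry {w : Fin (n+1) → ℝ}
    (hsing : ∀ p ∈ pairIdx n, Mw w p = {pick w p}) {p : Fin (n+1) × Fin (n+1)}
    (hp : p.1 ≤ p.2) :
    (∀ q ∈ pairIdx n, pick w q ∈ Mw (uJ p) q) ↔ bdry w p := by
  have hple : p.1.val ≤ p.2.val := hp
  constructor
  · intro h
    constructor
    · intro hi k hkIcc
      set i' : Fin (n+1) := ⟨p.1.val - 1, lt_of_le_of_lt (Nat.sub_le _ _) p.1.isLt⟩ with hi'
      set q : Fin (n+1) × Fin (n+1) := (i', p.2) with hqdef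
      have hq : q ∈ pairIdx n := by
        rw [mem_pairIdx]
        show i' ≤ p.2
        rw [Fin.le_def]
        simp only [hi', hqdef]
        omega
      have h1 := h q hq
      rw [Mw_uJ] at h1
      have hi'notp : i' ∉ Finset.Icc p.1 p.2 := by
        rw [Finset.mem_Icc]
        rintro ⟨hh, _⟩
        rw [Fin.le_def] at hh
        simp only [hi', hqdef] at hh
        omega
      have hns : ¬ (Finset.Icc q.1 q.2 ⊆ Finset.Icc p.1 p.2) := by
        intro hsub
        exact hi'notp (hsub (Finset.mem_Icc.2 ⟨le_refl _, by rw [Fin.le_def]; simp only [hi', hqdef]; omega⟩))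
      rw [if_neg hns, Finset.mem_sdiff, Finset.mem_Icc, Finset.mem_Icc] at h1
      obtain ⟨⟨ha1, ha2⟩, ha3⟩ := h1
      rw [not_and_or] at ha3
      have hpick : pick w q = i' := by
        apply Fin.ext
        rw [Fin.le_def] at ha1 ha2
        rcases ha3 with h3 | h3
        · rw [not_le, Fin.lt_def] at h3
          simp only [hi', hqdef] at ha1 ha2 h3 ⊢
          omega
        · exact absurd ha2 h3
      have hkq : k ∈ Finset.Icc q.1 q.2 := by
        rw [Finset.mem_Icc] at hkIcc ⊢
        refine ⟨?_, hkIcc.2⟩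
        rw [Fin.le_def]
        have := hkIcc.1
        rw [Fin.le_def] at this
        simp only [hi', hqdef]
        omega
      have hkne : k ≠ pick w q := by
        rw [hpick]
        intro hh
        have := hkIcc
        rw [hh] at this
        exact hi'notp this
      have := strict_max hsing hq k hkq hkne
      rwa [hpick] at this
    · intro hj k hkIcc
      set j' : Fin (n+1) := ⟨p.2.val + 1, by omega⟩ with hj'
      set q : Fin (n+1) × Fin (n+1) := (p.1, j') with hqdef
      have hq : q ∈ pairIdx n := by
        rw [mem_pairIdx]
        show p.1 ≤ j'
        rw [Fin.le_def]
        simp only [hj', hqdef]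
        omega
      have h1 := h q hq
      rw [Mw_uJ] at h1
      have hj'notp : j' ∉ Finset.Icc p.1 p.2 := by
        rw [Finset.mem_Icc]
        rintro ⟨_, hh⟩
        rw [Fin.le_def] at hh
        simp only [hj', hqdef] at hh
        omega
      have hns : ¬ (Finset.Icc q.1 q.2 ⊆ Finset.Icc p.1 p.2) := by
        intro hsub
        exact hj'notp (hsub (Finset.mem_Icc.2 ⟨by rw [Fin.le_def]; simp only [hj', hqdef]; omega, le_refl _⟩))
      rw [if_neg hns, Finset.mem_sdiff, Finset.mem_Icc, Finset.mem_Icc] at h1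
      obtain ⟨⟨ha1, ha2⟩, ha3⟩ := h1
      rw [not_and_or] at ha3
      have hpick : pick w q = j' := by
        apply Fin.ext
        rw [Fin.le_def] at ha1 ha2
        rcases ha3 with h3 | h3
        · exact absurd ha1 h3
        · rw [not_le, Fin.lt_def] at h3
          simp only [hj', hqdef] at ha1 ha2 h3 ⊢
          omega
      have hkq : k ∈ Finset.Icc q.1 q.2 := by
        rw [Finset.mem_Icc] at hkIcc ⊢
        refine ⟨hkIcc.1, ?_⟩
        rw [Fin.le_def]
        have := hkIcc.2
        rw [Fin.le_def] at this
        simp only [hj', hqdef]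
        omega
      have hkne : k ≠ pick w q := by
        rw [hpick]
        intro hh
        have := hkIcc
        rw [hh] at this
        exact hj'notp this
      have := strict_max hsing hq k hkq hkne
      rwa [hpick] at this
  · rintro ⟨hL, hR⟩ q hq
    rw [Mw_uJ]
    by_cases hsub : Finset.Icc q.1 q.2 ⊆ Finset.Icc p.1 p.2
    · rw [if_pos hsub]
      exact Mw_subset (pick_mem (mem_pairIdx.1 hq))
    · rw [if_neg hsub, Finset.mem_sdiff]
      refine ⟨Mw_subset (pick_mem (mem_pairIdx.1 hq)), ?_⟩
      intro hpin
      obtain ⟨t, htq, htp⟩ := Finset.not_subset.1 hsub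
      have htq' := Finset.mem_Icc.1 htq
      have hpin' := Finset.mem_Icc.1 hpin
      have hpickq := Finset.mem_Icc.1 (Mw_subset (pick_mem (w := w) (mem_pairIdx.1 hq)))
      rw [Finset.mem_Icc, not_and_or] at htp
      by_cases hcase : t.val < p.1.val
      · have hi : 0 < p.1.val := by omega
        set i' : Fin (n+1) := ⟨p.1.val - 1, lt_of_le_of_lt (Nat.sub_le _ _) p.1.isLt⟩ with hi'
        have hi'q : i' ∈ Finset.Icc q.1 q.2 := by
          rw [Finset.mem_Icc]
          constructor
          · rw [Fin.le_def]
            have := htq'.1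
            rw [Fin.le_def] at this
            simp only [hi']
            omega
          · rw [Fin.le_def]
            have h1 := hpin'.1
            have h2 := hpickq.2
            rw [Fin.le_def] at h1 h2
            simp only [hi']
            omega
        have h1 : w i' ≤ w (pick w q) :=
          (mem_Mw.1 (pick_mem (mem_pairIdx.1 hq))).2 i' hi'q
        have h2 : w (pick w q) < w i' := hL hi (pick w q) hpin
        linarith
      · have hj : p.2.val < t.val := by
          rcases htp with h | h
          · rw [not_le, Fin.lt_def] at h
            omega
          · rw [not_le, Fin.lt_def] at h
            exact h
        have hjn : p.2.val < n := by
          have := t.isLt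
          omega
        set j' : Fin (n+1) := ⟨p.2.val + 1, by omega⟩ with hj'
        have hj'q : j' ∈ Finset.Icc q.1 q.2 := by
          rw [Finset.mem_Icc]
          constructor
          · rw [Fin.le_def]
            have h1 := hpin'.2
            have h2 := hpickq.1
            rw [Fin.le_def] at h1 h2
            simp only [hj']
            omega
          · rw [Fin.le_def]
            have := htq'.2
            rw [Fin.le_def] at this
            simp only [hj']
            omega
        have h1 : w j' ≤ w (pick w q) :=
          (mem_Mw.1 (pick_mem (mem_pairIdx.1 hq))).2 j' hj'q
        have h2 : w (pick w q) < w j' := hR hjn (pick w q) hpin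
        linarith


open Classical in
lemma card_good {w : Fin (n+1) → ℝ} (hsing : ∀ p ∈ pairIdx n, Mw w p = {pick w p}) :
    ((pairIdx n).filter (fun p => ¬(p.1 = 0 ∧ p.2 = Fin.last n) ∧ bdry w p)).card = n := by
  set m : Fin (n+1) := pick w ((0 : Fin (n+1)), Fin.last n) with hmdef
  have hfull : ((0 : Fin (n+1)), Fin.last n) ∈ pairIdx n := mem_pairIdx.2 (Fin.zero_le _)
  have hmmax : ∀ l : Fin (n+1), w l ≤ w m := by
    intro l
    apply (mem_Mw.1 (pick_mem (mem_pairIdx.1 hfull))).2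
    show l ∈ Finset.Icc _ _
    rw [Icc_zero_last]
    exact Finset.mem_univ l
  have hbij : ((pairIdx n).filter (fun p => ¬(p.1 = 0 ∧ p.2 = Fin.last n) ∧ bdry w p)).card
      = (Finset.univ.erase m).card := by
    apply Finset.card_bij (fun p _ => pick w p)
    · -- maps into
      rintro p hp
      rw [Finset.mem_filter] at hp
      obtain ⟨hpair, hproper, hbdry⟩ := hp
      rw [Finset.mem_erase]
      refine ⟨?_, Finset.mem_univ _⟩
      intro heq
      have hpmem : pick w p ∈ Finset.Icc p.1 p.2 := Mw_subset (pick_mem (mem_pairIdx.1 hpair))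
      rw [not_and_or] at hproper
      rcases hproper with h1 | h2
      · have hi0 : 0 < p.1.val := by
          rcases Nat.eq_zero_or_pos p.1.val with h | h
          · exact absurd (Fin.ext h) h1
          · exact h
        have hlt := hbdry.1 hi0 (pick w p) hpmem
        have hle := hmmax ⟨p.1.val - 1, lt_of_le_of_lt (Nat.sub_le _ _) p.1.isLt⟩
        rw [heq] at hlt
        linarith
      · have hj0 : p.2.val < n := by
          have := p.2.isLt
          rcases Nat.lt_or_ge p.2.val n with h | h
          · exact h
          · exact absurd (Fin.ext (show p.2.val = n by omega)) h2
        have hlt := hbdry.2 hj0 (pick w p) hpmem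
        have hle := hmmax ⟨p.2.val + 1, by omega⟩
        rw [heq] at hlt
        linarith
    · -- injective
      have aux1 : ∀ p p' : Fin (n+1) × Fin (n+1), p ∈ pairIdx n → p' ∈ pairIdx n →
          bdry w p' → pick w p = pick w p' → p.1.val < p'.1.val → False := by
        intro p p' hpair hpair' hbdry' hpp h1
        have hi0 : 0 < p'.1.val := by omega
        set i'' : Fin (n+1) := ⟨p'.1.val - 1, lt_of_le_of_lt (Nat.sub_le _ _) p'.1.isLt⟩
          with hi''
        have htIcc : pick w p ∈ Finset.Icc p.1 p.2 := Mw_subset (pick_mem (mem_pairIdx.1 hpair))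
        have htIcc' : pick w p' ∈ Finset.Icc p'.1 p'.2 := Mw_subset (pick_mem (mem_pairIdx.1 hpair'))
        have hi''Icc : i'' ∈ Finset.Icc p.1 p.2 := by
          rw [Finset.mem_Icc]
          have ht1 := (Finset.mem_Icc.1 htIcc).2
          have ht2 := (Finset.mem_Icc.1 htIcc').1
          rw [Fin.le_def] at ht1 ht2
          rw [hpp] at ht1
          constructor
          · rw [Fin.le_def]; simp only [hi'']; omega
          · rw [Fin.le_def]; simp only [hi'']; omega
        have hle : w i'' ≤ w (pick w p) := (mem_Mw.1 (pick_mem (mem_pairIdx.1 hpair))).2 i'' hi''Icc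
        have hlt : w (pick w p') < w i'' := hbdry'.1 hi0 (pick w p') htIcc'
        rw [hpp] at hle
        linarith
      have aux2 : ∀ p p' : Fin (n+1) × Fin (n+1), p ∈ pairIdx n → p' ∈ pairIdx n →
          bdry w p → pick w p = pick w p' → p.2.val < p'.2.val → False := by
        intro p p' hpair hpair' hbdry hpp h1
        have hj0 : p.2.val < n := by
          have := p'.2.isLt
          omega
        set j'' : Fin (n+1) := ⟨p.2.val + 1, by omega⟩ with hj''
        have htIcc : pick w p ∈ Finset.Icc p.1 p.2 := Mw_subset (pick_mem (mem_pairIdx.1 hpair))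
        have htIcc' : pick w p' ∈ Finset.Icc p'.1 p'.2 := Mw_subset (pick_mem (mem_pairIdx.1 hpair'))
        have hj''Icc : j'' ∈ Finset.Icc p'.1 p'.2 := by
          rw [Finset.mem_Icc]
          have ht1 := (Finset.mem_Icc.1 htIcc).2
          have ht2 := (Finset.mem_Icc.1 htIcc').1
          rw [Fin.le_def] at ht1 ht2
          rw [hpp] at ht1
          constructor
          · rw [Fin.le_def]; simp only [hj'']; omega
          · rw [Fin.le_def]; simp only [hj'']; omega
        have hle : w j'' ≤ w (pick w p') := (mem_Mw.1 (pick_mem (mem_pairIdx.1 hpair'))).2 j'' hj''Icc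
        have hlt : w (pick w p) < w j'' := hbdry.2 hj0 (pick w p) htIcc
        rw [hpp] at hlt
        linarith
      intro p hp p' hp' hpp
      rw [Finset.mem_filter] at hp hp'
      have h1 : p.1 = p'.1 := by
        apply Fin.ext
        rcases lt_trichotomy p.1.val p'.1.val with h | h | h
        · exact absurd (aux1 p p' hp.1 hp'.1 hp'.2.2 hpp h) (fun hh => hh)
        · exact h
        · exact absurd (aux1 p' p hp'.1 hp.1 hp.2.2 hpp.symm h) (fun hh => hh)
      have h2 : p.2 = p'.2 := by
        apply Fin.ext
        rcases lt_trichotomy p.2.val p'.2.val with h | h | h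
        · exact absurd (aux2 p p' hp.1 hp'.1 hp.2.2 hpp h) (fun hh => hh)
        · exact h
        · exact absurd (aux2 p' p hp'.1 hp.1 hp'.2.2 hpp.symm h) (fun hh => hh)
      exact Prod.ext h1 h2
    · -- surjective
      intro t ht
      have htm : t ≠ m := (Finset.mem_erase.1 ht).1
      set Lt : Finset (Fin (n+1)) := Finset.univ.filter (fun k => k < t ∧ w t < w k) with hLt
      set Rt : Finset (Fin (n+1)) := Finset.univ.filter (fun k => t < k ∧ w t < w k) with hRt
      set iv : ℕ := if h : Lt.Nonempty then (Lt.max' h).val + 1 else 0 with hivdef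
      set jv : ℕ := if h : Rt.Nonempty then (Rt.min' h).val - 1 else n with hjvdef
      have hLmem : ∀ h : Lt.Nonempty, (Lt.max' h) < t ∧ w t < w (Lt.max' h) := by
        intro h
        exact (Finset.mem_filter.1 (Finset.max'_mem Lt h)).2
      have hRmem : ∀ h : Rt.Nonempty, t < (Rt.min' h) ∧ w t < w (Rt.min' h) := by
        intro h
        exact (Finset.mem_filter.1 (Finset.min'_mem Rt h)).2
      have hiv_le : iv ≤ t.val := by
        rw [hivdef]
        split
        · next h =>
            have := (hLmem h).1
            rw [Fin.lt_def] at this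
            omega
        · omega
      have hjv_ge : t.val ≤ jv := by
        rw [hjvdef]
        split
        · next h =>
            have := (hRmem h).1
            rw [Fin.lt_def] at this
            omega
        · have := t.isLt; omega
      have hjv_le : jv ≤ n := by
        rw [hjvdef]
        split
        · next h =>
            have := (Rt.min' h).isLt
            omega
        · omega
      set i : Fin (n+1) := ⟨iv, by omega⟩ with hidef
      set j : Fin (n+1) := ⟨jv, by omega⟩ with hjdef
      have hq : (i, j) ∈ pairIdx n := by
        rw [mem_pairIdx]
        show i ≤ j
        rw [Fin.le_def]
        simp only [hidef, hjdef]
        omega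
      have key0 : ∀ k ∈ Finset.Icc i j, w k ≤ w t := by
        intro k hk
        have hk' := Finset.mem_Icc.1 hk
        have hk1 : iv ≤ k.val := hk'.1
        have hk2 : k.val ≤ jv := hk'.2
        rcases lt_trichotomy k t with h | h | h
        · by_contra hgt
          have hkL : k ∈ Lt := by
            rw [hLt, Finset.mem_filter]
            exact ⟨Finset.mem_univ _, h, not_le.1 hgt⟩
          have hne : Lt.Nonempty := ⟨k, hkL⟩
          have hivval : iv = (Lt.max' hne).val + 1 := by rw [hivdef, dif_pos hne]
          have := Finset.le_max' Lt k hkL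
          rw [Fin.le_def] at this
          omega
        · rw [h]
        · by_contra hgt
          have hkR : k ∈ Rt := by
            rw [hRt, Finset.mem_filter]
            exact ⟨Finset.mem_univ _, h, not_le.1 hgt⟩
          have hne : Rt.Nonempty := ⟨k, hkR⟩
          have hjvval : jv = (Rt.min' hne).val - 1 := by rw [hjvdef, dif_pos hne]
          have h2 := Finset.min'_le Rt k hkR
          rw [Fin.le_def] at h2
          have h3 := (hRmem hne).1
          rw [Fin.lt_def] at h3
          omega
      have htmem : t ∈ Mw w (i, j) := by
        rw [mem_Mw]
        constructor
        · show t ∈ Finset.Icc i j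
          rw [Finset.mem_Icc]
          constructor
          · rw [Fin.le_def]; exact hiv_le
          · rw [Fin.le_def]; exact hjv_ge
        · exact fun l hl => key0 l hl
      have hpick : pick w (i, j) = t := by
        have := hsing (i, j) hq
        rw [this, Finset.mem_singleton] at htmem
        exact htmem.symm
      have hproper : ¬(i = 0 ∧ j = Fin.last n) := by
        rintro ⟨h0, hlast⟩
        apply htm
        rw [← hpick, hmdef, h0, hlast]
      have hbdry : bdry w (i, j) := by
        constructor
        · intro hi0 k hk
          have hne : Lt.Nonempty := by
            by_contra h
            have : iv = 0 := by rw [hivdef, dif_neg h]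
            simp only [hidef] at hi0
            omega
          have hivval : iv = (Lt.max' hne).val + 1 := by rw [hivdef, dif_pos hne]
          have hfin : (⟨(i, j).1.val - 1, lt_of_le_of_lt (Nat.sub_le _ _) (i, j).1.isLt⟩ : Fin (n+1))
              = Lt.max' hne := by
            apply Fin.ext
            simp only [hidef]
            omega
          rw [hfin]
          calc w k ≤ w t := key0 k hk
            _ < w (Lt.max' hne) := (hLmem hne).2
        · intro hj0 k hk
          have hne : Rt.Nonempty := by
            by_contra h
            have : jv = n := by rw [hjvdef, dif_neg h]
            simp only [hjdef] at hj0
            omega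
          have hjvval : jv = (Rt.min' hne).val - 1 := by rw [hjvdef, dif_pos hne]
          have hminpos : t.val < (Rt.min' hne).val := by
            have := (hRmem hne).1
            rwa [Fin.lt_def] at this
          have hfin : (⟨(i, j).2.val + 1, by simp only [hjdef] at hj0 ⊢; omega⟩ : Fin (n+1))
              = Rt.min' hne := by
            apply Fin.ext
            simp only [hjdef]
            omega
          rw [hfin]
          calc w k ≤ w t := key0 k hk
            _ < w (Rt.min' hne) := (hRmem hne).2
      refine ⟨(i, j), ?_, hpick⟩
      rw [Finset.mem_filter]
      exact ⟨hq, hproper, hbdry⟩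
  rw [hbij, Finset.card_erase_of_mem (Finset.mem_univ m), Finset.card_univ, Fintype.card_fin]
  omega


lemma Icc_inj {p p' : Fin (n+1) × Fin (n+1)} (hp : p.1 ≤ p.2) (hp' : p'.1 ≤ p'.2)
    (h : Finset.Icc p.1 p.2 = Finset.Icc p'.1 p'.2) : p = p' := by
  have h1 : p.1 ∈ Finset.Icc p'.1 p'.2 := h ▸ Finset.mem_Icc.2 ⟨le_refl _, hp⟩
  have h2 : p'.1 ∈ Finset.Icc p.1 p.2 := h.symm ▸ Finset.mem_Icc.2 ⟨le_refl _, hp'⟩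
  have h3 : p.2 ∈ Finset.Icc p'.1 p'.2 := h ▸ Finset.mem_Icc.2 ⟨hp, le_refl _⟩
  have h4 : p'.2 ∈ Finset.Icc p.1 p.2 := h.symm ▸ Finset.mem_Icc.2 ⟨hp', le_refl _⟩
  rw [Finset.mem_Icc] at h1 h2 h3 h4
  exact Prod.ext (le_antisymm (h2.1) (h1.1)) (le_antisymm (h3.2) (h4.2))

/-- The functional `1` on the interval. -/
def oneJ (p : Fin (n+1) × Fin (n+1)) : Fin (n+1) → ℝ :=
  fun k => if k ∈ Finset.Icc p.1 p.2 then (1:ℝ) else 0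

open Classical in
lemma dot_oneJ_on_Sface {a : Fin (n+1) × Fin (n+1) → ℝ} {p' : Fin (n+1) × Fin (n+1)}
    {x : Fin (n+1) → ℝ} (hx : x ∈ Sface (n := n) a (uJ p')) :
    dot (oneJ p') x = ∑ q ∈ (pairIdx n).filter
      (fun q => Finset.Icc q.1 q.2 ⊆ Finset.Icc p'.1 p'.2), a q := by
  obtain ⟨g, hg, rfl⟩ := hx
  rw [dot_sum, Finset.sum_filter]
  apply Finset.sum_congr rfl
  intro q hq
  rw [dot_smul]
  by_cases hsub : Finset.Icc q.1 q.2 ⊆ Finset.Icc p'.1 p'.2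
  · rw [if_pos hsub]
    have hgq := hg q hq
    rw [Mw_uJ, if_pos hsub] at hgq
    rw [dot_eq_of_hull (fun k hk => by rw [oneJ, if_pos (hsub hk)]) hgq, mul_one]
  · rw [if_neg hsub]
    have hgq := hg q hq
    rw [Mw_uJ, if_neg hsub] at hgq
    rw [dot_eq_of_hull (fun k hk => by
      rw [oneJ, if_neg (Finset.mem_sdiff.1 hk).2]) hgq, mul_zero]

open Classical in
lemma Fj_inj {a : Fin (n+1) × Fin (n+1) → ℝ}
    (ha : ∀ p : Fin (n+1) × Fin (n+1), p.1 ≤ p.2 → 0 < a p)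
    {p p' : Fin (n+1) × Fin (n+1)} (hp : p.1 ≤ p.2) (hp' : p'.1 ≤ p'.2)
    (hproper' : ¬(p'.1 = 0 ∧ p'.2 = Fin.last n)) (hne : p ≠ p') :
    maxFace (AssIII n a) (uJ p) ≠ maxFace (AssIII n a) (uJ p') := by
  rw [maxFace_eq_Sface ha, maxFace_eq_Sface ha]
  -- find p₀ and k*
  obtain ⟨p₀, hp₀pair, hp₀notsub, kstar, hkM, hkIcc'⟩ :
      ∃ p₀ : Fin (n+1) × Fin (n+1), p₀ ∈ pairIdx n ∧
        ¬(Finset.Icc p₀.1 p₀.2 ⊆ Finset.Icc p'.1 p'.2) ∧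
        ∃ kstar, kstar ∈ Mw (uJ p) p₀ ∧ kstar ∈ Finset.Icc p'.1 p'.2 := by
    by_cases hss : Finset.Icc p'.1 p'.2 ⊆ Finset.Icc p.1 p.2
    · refine ⟨p, mem_pairIdx.2 hp, ?_, p'.1, ?_, Finset.mem_Icc.2 ⟨le_refl _, hp'⟩⟩
      · intro hsub
        exact hne (Icc_inj hp hp' (Finset.Subset.antisymm hsub hss))
      · rw [Mw_uJ, if_pos (Finset.Subset.refl _)]
        exact hss (Finset.mem_Icc.2 ⟨le_refl _, hp'⟩)
    · obtain ⟨t, htp', htp⟩ := Finset.not_subset.1 hss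
      refine ⟨((0 : Fin (n+1)), Fin.last n), mem_pairIdx.2 (Fin.zero_le _), ?_, t, ?_, htp'⟩
      · intro hsub
        obtain ⟨z, hz⟩ := exists_not_mem_Icc hproper'
        apply hz
        apply hsub
        show z ∈ Finset.Icc _ _
        rw [Icc_zero_last]
        exact Finset.mem_univ z
      · rw [Mw_uJ, if_neg]
        · rw [Finset.mem_sdiff]
          constructor
          · show t ∈ Finset.Icc _ _
            rw [Icc_zero_last]
            exact Finset.mem_univ t
          · exact htp
        · intro hsub
          apply htp
          apply hsub
          show t ∈ Finset.Icc _ _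
          rw [Icc_zero_last]
          exact Finset.mem_univ t
  intro hEq
  set g : (Fin (n+1) × Fin (n+1)) → (Fin (n+1) → ℝ) :=
    Function.update (fun q => eVec (pick (uJ p) q)) p₀ (eVec kstar) with hgdef
  have hxS : (∑ q ∈ pairIdx n, a q • g q) ∈ Sface a (uJ p) := by
    refine ⟨g, fun q hq => ?_, rfl⟩
    by_cases h : q = p₀
    · subst h
      rw [hgdef, Function.update_self]
      exact subset_convexHull ℝ _ (Finset.mem_coe.2 (Finset.mem_image_of_mem _ hkM))
    · rw [hgdef, Function.update_of_ne h]
      exact subset_convexHull ℝ _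
        (Finset.mem_coe.2 (Finset.mem_image_of_mem _ (pick_mem (mem_pairIdx.1 hq))))
  have hval := dot_oneJ_on_Sface (p' := p') (hEq ▸ hxS)
  set T := (pairIdx n).filter (fun q => Finset.Icc q.1 q.2 ⊆ Finset.Icc p'.1 p'.2) with hT
  have hp₀T : p₀ ∉ T := by
    rw [hT, Finset.mem_filter]
    rintro ⟨_, h⟩
    exact hp₀notsub h
  have hterm : ∀ q ∈ pairIdx n, dot (oneJ p') (a q • g q)
      = a q * (if q = p₀ then oneJ p' kstar else oneJ p' (pick (uJ p) q)) := by
    intro q hq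
    rw [dot_smul]
    by_cases h : q = p₀
    · subst h
      rw [if_pos rfl, hgdef, Function.update_self, dot_eVec]
    · rw [if_neg h, hgdef, Function.update_of_ne h, dot_eVec]
  have hlower : (∑ q ∈ pairIdx n, a q * (if q = p₀ then oneJ p' kstar
      else oneJ p' (pick (uJ p) q)))
      ≥ a p₀ + ∑ q ∈ T, a q := by
    have hsub : insert p₀ T ⊆ pairIdx n := by
      intro q hq
      rcases Finset.mem_insert.1 hq with h | h
      · exact h ▸ hp₀pair
      · exact Finset.filter_subset _ _ h
    have hnn : ∀ q ∈ pairIdx n, q ∉ insert p₀ T →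
        0 ≤ a q * (if q = p₀ then oneJ p' kstar else oneJ p' (pick (uJ p) q)) := by
      intro q hq _
      apply mul_nonneg (le_of_lt (ha q (mem_pairIdx.1 hq)))
      split <;> (rw [oneJ]; split <;> norm_num)
    calc ∑ q ∈ pairIdx n, a q * (if q = p₀ then oneJ p' kstar else oneJ p' (pick (uJ p) q))
        ≥ ∑ q ∈ insert p₀ T, a q * (if q = p₀ then oneJ p' kstar else oneJ p' (pick (uJ p) q)) :=
          Finset.sum_le_sum_of_subset_of_nonneg hsub hnn
      _ = a p₀ * oneJ p' kstar
          + ∑ q ∈ T, a q * (if q = p₀ then oneJ p' kstar else oneJ p' (pick (uJ p) q)) := by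
          rw [Finset.sum_insert hp₀T, if_pos rfl]
      _ = a p₀ + ∑ q ∈ T, a q := by
          have h1 : oneJ p' kstar = 1 := by rw [oneJ, if_pos hkIcc']
          rw [h1, mul_one]
          congr 1
          apply Finset.sum_congr rfl
          intro q hq
          have hqT := hq
          rw [hT, Finset.mem_filter] at hqT
          have hqne : q ≠ p₀ := fun h => hp₀T (h ▸ hq)
          rw [if_neg hqne]
          have hpk : pick (uJ p) q ∈ Finset.Icc q.1 q.2 :=
            Mw_subset (pick_mem (mem_pairIdx.1 hqT.1))
          rw [oneJ, if_pos (hqT.2 hpk), mul_one]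
  have hdot : dot (oneJ p') (∑ q ∈ pairIdx n, a q • g q)
      = ∑ q ∈ pairIdx n, a q * (if q = p₀ then oneJ p' kstar else oneJ p' (pick (uJ p) q)) := by
    rw [dot_sum]
    exact Finset.sum_congr rfl hterm
  rw [hdot] at hval
  have hap₀ : 0 < a p₀ := ha p₀ (mem_pairIdx.1 hp₀pair)
  rw [hval] at hlower
  rw [hT] at hlower
  linarith

end Ass12

/-- `Ass_n^{III}(a)` lies in the hyperplane
`{x : ∑ i, x i = ∑ a_{ij}}`, its affine span has dimension exactly `n`, and it
is a simple polytope: every vertex lies on exactly `n` facets. -/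
theorem assIII_dim_and_simple (n : ℕ) (hn : 1 ≤ n)
    (a : Fin (n+1) × Fin (n+1) → ℝ)
    (ha : ∀ p : Fin (n+1) × Fin (n+1), p.1 ≤ p.2 → 0 < a p) :
    (∀ x ∈ AssIII n a, ∑ i, x i = ∑ p ∈ pairIdx n, a p) ∧
    dimOf (AssIII n a) = n ∧
    (∀ v : Fin (n+1) → ℝ, vertexOf (AssIII n a) v →
      {F : Set (Fin (n+1) → ℝ) | IsFacetOf (AssIII n a) F ∧ v ∈ F}.ncard = n) := by
  classical
  have hdimP : dimOf (AssIII n a) = n := Ass12.dimOf_AssIII ha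
  refine ⟨fun x hx => Ass12.sum_coords_of_mem hx, hdimP, ?_⟩
  intro v hv
  obtain ⟨hvP, u0, hw⟩ := hv
  obtain ⟨hsing, hvrep⟩ := Ass12.vertex_data ha hw
  set G := (pairIdx n).filter
    (fun p => ¬(p.1 = 0 ∧ p.2 = Fin.last n) ∧ Ass12.bdry u0 p) with hG
  have hFacets : {F : Set (Fin (n+1) → ℝ) | IsFacetOf (AssIII n a) F ∧ v ∈ F}
      = (fun p => maxFace (AssIII n a) (Ass12.uJ p)) '' ↑G := by
    ext F
    constructor
    · rintro ⟨⟨⟨u, rfl⟩, hdim⟩, hvF⟩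
      have h1 : dimOf (maxFace (AssIII n a) u)
          = Module.finrank ℝ (Ass12.Wspan (n := n) u) := by
        rw [dimOf, Ass12.maxFace_eq_Sface ha, Ass12.spanDiff_Sface ha]
      rw [h1, hdimP] at hdim
      have hrank : Module.finrank ℝ (Ass12.Wspan (n := n) u) = n - 1 := by omega
      obtain ⟨p, hp1, hp2, hMweq⟩ := Ass12.facet_structure hn hrank
      have hFeq : maxFace (AssIII n a) u = maxFace (AssIII n a) (Ass12.uJ p) := by
        rw [Ass12.maxFace_eq_Sface ha, Ass12.maxFace_eq_Sface ha]
        exact Ass12.Sface_congr (fun q _ => hMweq q)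
      have hvmem : v ∈ maxFace (AssIII n a) (Ass12.uJ p) := hFeq ▸ hvF
      rw [hvrep] at hvmem
      have hbd := (Ass12.mem_uJface_iff_bdry hsing hp1).1
        ((Ass12.vertex_in_face_iff ha).1 hvmem)
      refine ⟨p, ?_, hFeq.symm⟩
      rw [Finset.mem_coe, hG, Finset.mem_filter]
      exact ⟨Ass12.mem_pairIdx.2 hp1, hp2, hbd⟩
    · rintro ⟨p, hpG, rfl⟩
      rw [Finset.mem_coe, hG, Finset.mem_filter] at hpG
      obtain ⟨hpair, hproper, hbd⟩ := hpG
      have hp1 := Ass12.mem_pairIdx.1 hpair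
      refine ⟨⟨⟨Ass12.uJ p, rfl⟩, ?_⟩, ?_⟩
      · have h1 : dimOf (maxFace (AssIII n a) (Ass12.uJ p)) = n - 1 := by
          rw [dimOf, Ass12.maxFace_eq_Sface ha, Ass12.spanDiff_Sface ha,
            Ass12.finrank_Wspan_uJ hp1 hproper]
        rw [h1, hdimP]
        omega
      · rw [hvrep]
        exact (Ass12.vertex_in_face_iff ha).2
          ((Ass12.mem_uJface_iff_bdry hsing hp1).2 hbd)
  rw [hFacets]
  have hinj : Set.InjOn (fun p => maxFace (AssIII n a) (Ass12.uJ p)) ↑G := by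
    intro p hpG p' hpG' heq
    rw [Finset.mem_coe, hG, Finset.mem_filter] at hpG hpG'
    by_contra hne
    exact Ass12.Fj_inj ha (Ass12.mem_pairIdx.1 hpG.1) (Ass12.mem_pairIdx.1 hpG'.1)
      hpG'.2.1 hne heq
  rw [Set.ncard_image_of_injOn hinj, Set.ncard_coe_finset]
  exact Ass12.card_good hsing
end

section
/- For 1 ≤ i ≤ n, let w^{(i)} ∈ (ℝ^{n+1})^* be the linear functional with first i coordinates equal to 1 and the remaining n+1−i coordinates equal to 0. Then for any positive parameters a, the face of Ass_n^{III}(a) maximizing w^{(i)} and the face maximizing −w^{(i)} are both facets, and the linear spans of their difference sets both equal span{ e_k − e_{k+1} : 1 ≤ k ≤ n, k ≠ i }; in particular these two facets are parallel. -/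
open Finset

section AssIIIAux

open Module

variable {m : ℕ}

/-- Sum of coordinates over a finset, as a linear map. -/
noncomputable def sumOn (s : Finset (Fin m)) : (Fin m → ℝ) →ₗ[ℝ] ℝ where
  toFun x := ∑ j ∈ s, x j
  map_add' x y := by simp [Finset.sum_add_distrib]
  map_smul' c x := by simp [Finset.mul_sum]

lemma sumOn_apply (s : Finset (Fin m)) (x : Fin m → ℝ) : sumOn s x = ∑ j ∈ s, x j := rfl

lemma sumOn_eVec (s : Finset (Fin m)) (k : Fin m) :
    sumOn s (eVec k) = if k ∈ s then 1 else 0 := by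
  simp only [sumOn_apply, eVec, Pi.single_apply]
  exact Finset.sum_ite_eq' s k (fun _ => (1:ℝ))

lemma dot_eVec (w : Fin m → ℝ) (k : Fin m) : dot w (eVec k) = w k := by
  simp only [dot, eVec, Pi.single_apply, mul_ite, mul_one, mul_zero]
  simp [Finset.sum_ite_eq' univ k w]

lemma dot_isLinear (w : Fin m → ℝ) : IsLinearMap ℝ (dot w) := by
  constructor
  · intro x y; simp [dot, mul_add, Finset.sum_add_distrib]
  · intro c x; simp [dot, Finset.mul_sum]; apply Finset.sum_congr rfl; intros; ring

lemma dot_sum {ι : Type*} (w : Fin m → ℝ) (s : Finset ι) (c : ι → ℝ) (f : ι → Fin m → ℝ) :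
    dot w (∑ p ∈ s, c p • f p) = ∑ p ∈ s, c p * dot w (f p) := by
  have h := map_sum ((dot_isLinear w).mk' (dot w)) (fun p => c p • f p) s
  simp only [IsLinearMap.mk'_apply] at h
  rw [h]
  apply Finset.sum_congr rfl
  intro p _
  rw [(dot_isLinear w).map_smul]
  rfl

lemma dot_neg (w x : Fin m → ℝ) : dot (-w) x = - dot w x := by
  simp [dot, Finset.sum_neg_distrib]

lemma span_sandwich {A B C : Submodule ℝ (Fin m → ℝ)} (hAB : A ≤ B) (hBC : B ≤ C)
    (h : finrank ℝ C ≤ finrank ℝ A) : B = A := by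
  have h1 : finrank ℝ B ≤ finrank ℝ A := le_trans (Submodule.finrank_mono hBC) h
  exact (Submodule.eq_of_le_of_finrank_le hAB h1).symm

variable {n : ℕ}

lemma eVec_mem_seg (p1 p2 k : Fin (n+1)) (h1 : p1 ≤ k) (h2 : k ≤ p2) :
    eVec k ∈ stdSimplexSeg n p1 p2 :=
  subset_convexHull ℝ _ ⟨k, h1, h2, rfl⟩

lemma seg_dot_le (w : Fin (n+1) → ℝ) (p1 p2 : Fin (n+1)) (c : ℝ)
    (h : ∀ k, p1 ≤ k → k ≤ p2 → w k ≤ c) :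
    ∀ x ∈ stdSimplexSeg n p1 p2, dot w x ≤ c := by
  intro x hx
  have := convexHull_min (show {x | ∃ k : Fin (n+1), p1 ≤ k ∧ k ≤ p2 ∧ x = eVec k} ⊆ {x | dot w x ≤ c} by
    rintro y ⟨k, h1, h2, rfl⟩
    rw [Set.mem_setOf_eq, dot_eVec]
    exact h k h1 h2) (convex_halfSpace_le (dot_isLinear w) c)
  exact this hx

lemma seg_sum_one (p1 p2 : Fin (n+1)) :
    ∀ x ∈ stdSimplexSeg n p1 p2, sumOn univ x = 1 := by
  intro x hx
  have := convexHull_min (show {x | ∃ k : Fin (n+1), p1 ≤ k ∧ k ≤ p2 ∧ x = eVec k} ⊆ {x | sumOn univ x = 1} by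
    rintro y ⟨k, h1, h2, rfl⟩
    simp [sumOn_eVec]) (convex_hyperplane (sumOn univ).isLinear 1)
  exact this hx

variable {a : Fin (n+1) × Fin (n+1) → ℝ}

lemma memP (g : Fin (n+1) × Fin (n+1) → Fin (n+1))
    (hg : ∀ p ∈ pairIdx n, p.1 ≤ g p ∧ g p ≤ p.2) :
    (∑ p ∈ pairIdx n, a p • eVec (g p)) ∈ AssIII n a :=
  ⟨fun p => eVec (g p), fun p hp => eVec_mem_seg _ _ _ (hg p hp).1 (hg p hp).2, rfl⟩

lemma sumP : ∀ x ∈ AssIII n a, sumOn univ x = ∑ p ∈ pairIdx n, a p := by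
  rintro x ⟨f, hf, rfl⟩
  rw [map_sum]
  apply Finset.sum_congr rfl
  intro p hp
  rw [map_smul, seg_sum_one p.1 p.2 (f p) (hf p hp), smul_eq_mul, mul_one]

lemma mem_maxFace_of_choice (ha0 : ∀ p ∈ pairIdx n, 0 ≤ a p)
    (w : Fin (n+1) → ℝ) (bound : Fin (n+1) × Fin (n+1) → ℝ)
    (hb : ∀ p ∈ pairIdx n, ∀ k, p.1 ≤ k → k ≤ p.2 → w k ≤ bound p)
    (g : Fin (n+1) × Fin (n+1) → Fin (n+1))
    (hg1 : ∀ p ∈ pairIdx n, p.1 ≤ g p ∧ g p ≤ p.2)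
    (hg2 : ∀ p ∈ pairIdx n, w (g p) = bound p) :
    (∑ p ∈ pairIdx n, a p • eVec (g p)) ∈ maxFace (AssIII n a) w := by
  refine ⟨memP g hg1, ?_⟩
  rintro y ⟨f, hf, rfl⟩
  rw [dot_sum, dot_sum]
  apply Finset.sum_le_sum
  intro p hp
  rw [dot_eVec, hg2 p hp]
  exact mul_le_mul_of_nonneg_left
    (seg_dot_le w p.1 p.2 (bound p) (hb p hp) (f p) (hf p hp)) (ha0 p hp)

lemma diff_choice (g g' : Fin (n+1) × Fin (n+1) → Fin (n+1))
    (p₀ : Fin (n+1) × Fin (n+1)) (hp₀ : p₀ ∈ pairIdx n)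
    (heq : ∀ p ∈ pairIdx n, p ≠ p₀ → g p = g' p) :
    (∑ p ∈ pairIdx n, a p • eVec (g p)) - (∑ p ∈ pairIdx n, a p • eVec (g' p))
      = a p₀ • (eVec (g p₀) - eVec (g' p₀)) := by
  rw [← Finset.sum_sub_distrib]
  rw [Finset.sum_eq_single_of_mem p₀ hp₀]
  · rw [smul_sub]
  · intro p hp hne
    rw [heq p hp hne, sub_self]

/-- The simple-root vectors. -/
noncomputable def rootV (n : ℕ) (k : Fin n) : Fin (n+1) → ℝ :=
  eVec k.castSucc - eVec k.succ

lemma phi_root (k l : Fin n) :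
    sumOn (univ.filter fun j : Fin (n+1) => (j:ℕ) ≤ (k:ℕ)) (rootV n l)
      = if l = k then 1 else 0 := by
  rw [rootV, map_sub, sumOn_eVec, sumOn_eVec]
  simp only [Finset.mem_filter, Finset.mem_univ, true_and, Fin.coe_castSucc, Fin.val_succ,
    Fin.ext_iff]
  split_ifs <;> try norm_num
  all_goals omega

lemma rootV_indep : LinearIndependent ℝ (rootV n) := by
  rw [Fintype.linearIndependent_iff]
  intro c hc k
  have h := congrArg (sumOn (univ.filter fun j : Fin (n+1) => (j:ℕ) ≤ (k:ℕ))) hc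
  rw [map_sum, map_zero] at h
  simp only [map_smul, phi_root, smul_eq_mul, mul_ite, mul_one, mul_zero] at h
  rwa [Finset.sum_ite_eq' univ k c, if_pos (Finset.mem_univ k)] at h

lemma rootV_indep_sub (Q : Fin n → Prop) :
    LinearIndependent ℝ (fun k : {k : Fin n // Q k} => rootV n k.val) :=
  rootV_indep.comp Subtype.val Subtype.val_injective

lemma card_ne (i : ℕ) (hi1 : 1 ≤ i) (hin : i ≤ n) :
    Fintype.card {k : Fin n // (k : ℕ) + 1 ≠ i} = n - 1 := by
  classical
  rw [Fintype.card_subtype]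
  have h : (univ.filter fun k : Fin n => (k : ℕ) + 1 ≠ i)
      = univ \ {(⟨i - 1, by omega⟩ : Fin n)} := by
    ext k
    simp [Fin.ext_iff]
    omega
  rw [h, Finset.card_sdiff_of_subset (by simp)]
  simp

lemma finrank_span_ne (i : ℕ) (hi1 : 1 ≤ i) (hin : i ≤ n) :
    finrank ℝ (Submodule.span ℝ {z : Fin (n+1) → ℝ |
      ∃ k : Fin n, (k : ℕ) + 1 ≠ i ∧ z = eVec k.castSucc - eVec k.succ}) = n - 1 := by
  have hset : {z : Fin (n+1) → ℝ | ∃ k : Fin n, (k : ℕ) + 1 ≠ i ∧ z = eVec k.castSucc - eVec k.succ}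
      = Set.range (fun k : {k : Fin n // (k : ℕ) + 1 ≠ i} => rootV n k.val) := by
    ext z
    constructor
    · rintro ⟨k, hk, rfl⟩; exact ⟨⟨k, hk⟩, rfl⟩
    · rintro ⟨⟨k, hk⟩, rfl⟩; exact ⟨k, hk, rfl⟩
  rw [hset, finrank_span_eq_card (rootV_indep_sub _), card_ne i hi1 hin]

lemma finrank_span_all :
    finrank ℝ (Submodule.span ℝ (Set.range (rootV n))) = n := by
  rw [finrank_span_eq_card rootV_indep, Fintype.card_fin]

/-- The two-functional map cutting out the common span. -/
noncomputable def PhiMap (n i : ℕ) : (Fin (n+1) → ℝ) →ₗ[ℝ] ℝ × ℝ :=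
  (sumOn (univ.filter fun j : Fin (n+1) => (j:ℕ) < i)).prod
  (sumOn (univ.filter fun j : Fin (n+1) => ¬ (j:ℕ) < i))

lemma PhiMap_eVec (i : ℕ) (k : Fin (n+1)) :
    PhiMap n i (eVec k)
      = (if (k:ℕ) < i then 1 else 0, if (k:ℕ) < i then 0 else 1) := by
  rw [PhiMap, LinearMap.prod_apply]
  simp only [Function.prod, sumOn_eVec, Finset.mem_filter, Finset.mem_univ, true_and]
  split_ifs <;> simp_all

lemma finrank_ker_Phi (i : ℕ) (hi1 : 1 ≤ i) (hin : i ≤ n) :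
    finrank ℝ (LinearMap.ker (PhiMap n i)) = n - 1 := by
  have hsurj : Function.Surjective (PhiMap n i) := by
    rintro ⟨c, d⟩
    refine ⟨c • eVec (0 : Fin (n+1)) + d • eVec (Fin.last n), ?_⟩
    have e1 : ((0 : Fin (n+1)) : ℕ) < i := by simp; omega
    have e2 : ¬ ((Fin.last n : Fin (n+1)) : ℕ) < i := by simp [Fin.last]; omega
    rw [map_add, map_smul, map_smul, PhiMap_eVec, PhiMap_eVec,
      if_pos e1, if_pos e1, if_neg e2, if_neg e2]
    simp [Prod.ext_iff]
  have hr := LinearMap.finrank_range_add_finrank_ker (PhiMap n i)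
  rw [LinearMap.range_eq_top.mpr hsurj, finrank_top, finrank_prod, finrank_self,
    finrank_fin_fun] at hr
  omega

lemma finrank_ker_sum :
    finrank ℝ (LinearMap.ker (sumOn (univ : Finset (Fin (n+1))))) = n := by
  have hsurj : Function.Surjective (sumOn (univ : Finset (Fin (n+1)))) := by
    intro c
    refine ⟨c • eVec (0 : Fin (n+1)), ?_⟩
    rw [map_smul, sumOn_eVec, if_pos (Finset.mem_univ _)]
    simp
  have hr := LinearMap.finrank_range_add_finrank_ker (sumOn (univ : Finset (Fin (n+1))))
  rw [LinearMap.range_eq_top.mpr hsurj, finrank_top, finrank_self, finrank_fin_fun] at hr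
  omega

lemma dot_wFun_eq (i : ℕ) (x : Fin (n+1) → ℝ) :
    dot (wFun n i) x = sumOn (univ.filter fun j : Fin (n+1) => (j:ℕ) < i) x := by
  rw [dot, sumOn_apply, Finset.sum_filter]
  apply Finset.sum_congr rfl
  intro j _
  simp only [wFun]
  split_ifs <;> ring

lemma diff_mem_kerPhi (i : ℕ) {u v : Fin (n+1) → ℝ}
    (hu : u ∈ AssIII n a) (hv : v ∈ AssIII n a)
    (hdot : dot (wFun n i) u = dot (wFun n i) v) :
    u - v ∈ LinearMap.ker (PhiMap n i) := by
  have hs2 : ∀ x : Fin (n+1) → ℝ,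
      sumOn (univ.filter fun j : Fin (n+1) => ¬ (j:ℕ) < i) x
        = sumOn univ x - sumOn (univ.filter fun j : Fin (n+1) => (j:ℕ) < i) x := by
    intro x
    have h := Finset.card_filter_add_card_filter_not (s := (univ : Finset (Fin (n+1))))
      (p := fun j : Fin (n+1) => (j:ℕ) < i)
    have h2 := Finset.sum_filter_add_sum_filter_not (univ : Finset (Fin (n+1)))
      (fun j : Fin (n+1) => (j:ℕ) < i) x
    simp only [sumOn_apply]
    linarith
  have h1 : sumOn (univ.filter fun j : Fin (n+1) => (j:ℕ) < i) (u - v) = 0 := by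
    rw [map_sub, ← dot_wFun_eq, ← dot_wFun_eq, hdot, sub_self]
  have h2 : sumOn (univ.filter fun j : Fin (n+1) => ¬ (j:ℕ) < i) (u - v) = 0 := by
    have e3 : sumOn (univ.filter fun j : Fin (n+1) => (j:ℕ) < i) u
        = sumOn (univ.filter fun j : Fin (n+1) => (j:ℕ) < i) v := by
      rw [← dot_wFun_eq, ← dot_wFun_eq, hdot]
    rw [map_sub, hs2 u, hs2 v, sumP u hu, sumP v hv, e3]
    ring
  rw [LinearMap.mem_ker, PhiMap, LinearMap.prod_apply, Function.prod, h1, h2]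
  rfl

end AssIIIAux


lemma diff_mem_spanDiff {m : ℕ} {F : Set (Fin m → ℝ)} {u v : Fin m → ℝ}
    (hu : u ∈ F) (hv : v ∈ F) (c : ℝ) (hc : c ≠ 0) {z : Fin m → ℝ}
    (hz : u - v = c • z) : z ∈ spanDiff F := by
  have hmem : u - v ∈ spanDiff F := Submodule.subset_span ⟨u, hu, v, hv, rfl⟩
  rw [hz] at hmem
  have h2 := Submodule.smul_mem _ c⁻¹ hmem
  rwa [smul_smul, inv_mul_cancel₀ hc, one_smul] at h2


/-- For `1 ≤ i ≤ n`, let `w` be the functional with first `i`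
coordinates `1` and the rest `0`. The faces of `Ass_n^{III}(a)` maximizing `w`
and `−w` are facets, and the spans of their difference sets both equal
`span{e k − e (k+1) : 1 ≤ k ≤ n, k ≠ i}`; in particular these two facets are
parallel. -/
theorem assIII_special_facets (n : ℕ)
    (a : Fin (n+1) × Fin (n+1) → ℝ)
    (ha : ∀ p : Fin (n+1) × Fin (n+1), p.1 ≤ p.2 → 0 < a p)
    (i : ℕ) (hi1 : 1 ≤ i) (hin : i ≤ n) :
    IsFacetOf (AssIII n a) (maxFace (AssIII n a) (wFun n i)) ∧
    IsFacetOf (AssIII n a) (maxFace (AssIII n a) (-wFun n i)) ∧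
    spanDiff (maxFace (AssIII n a) (wFun n i)) =
      Submodule.span ℝ {z : Fin (n+1) → ℝ |
        ∃ k : Fin n, (k : ℕ) + 1 ≠ i ∧ z = eVec k.castSucc - eVec k.succ} ∧
    spanDiff (maxFace (AssIII n a) (-wFun n i)) =
      Submodule.span ℝ {z : Fin (n+1) → ℝ |
        ∃ k : Fin n, (k : ℕ) + 1 ≠ i ∧ z = eVec k.castSucc - eVec k.succ} ∧
    ParallelFaces (maxFace (AssIII n a) (wFun n i))
      (maxFace (AssIII n a) (-wFun n i)) := by
  have hn : 1 ≤ n := le_trans hi1 hin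
  have ha0 : ∀ p ∈ pairIdx n, 0 ≤ a p := fun p hp => (ha p (Finset.mem_filter.mp hp).2).le
  have hbW : ∀ p ∈ pairIdx n, ∀ k : Fin (n+1), p.1 ≤ k → k ≤ p.2 →
      wFun n i k ≤ (if ((p.1 : Fin (n+1)) : ℕ) < i then (1:ℝ) else 0) := by
    intro p _ k h1 _
    rw [Fin.le_def] at h1
    simp only [wFun]
    split_ifs <;> try norm_num
    all_goals omega
  have hbW' : ∀ p ∈ pairIdx n, ∀ k : Fin (n+1), p.1 ≤ k → k ≤ p.2 →
      (-wFun n i) k ≤ (if ((p.2 : Fin (n+1)) : ℕ) < i then (-1:ℝ) else 0) := by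
    intro p _ k _ h2
    rw [Fin.le_def] at h2
    simp only [Pi.neg_apply, wFun]
    split_ifs <;> try norm_num
    all_goals omega
  have hfst : ∀ p ∈ pairIdx n, p.1 ≤ (Prod.fst p) ∧ (Prod.fst p) ≤ p.2 :=
    fun p hp => ⟨le_refl _, (Finset.mem_filter.mp hp).2⟩
  have hsnd : ∀ p ∈ pairIdx n, p.1 ≤ (Prod.snd p) ∧ (Prod.snd p) ≤ p.2 :=
    fun p hp => ⟨(Finset.mem_filter.mp hp).2, le_refl _⟩
  have hx0 : (∑ p ∈ pairIdx n, a p • eVec p.1) ∈ maxFace (AssIII n a) (wFun n i) :=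
    mem_maxFace_of_choice ha0 _ _ hbW _ hfst (fun p _ => rfl)
  have hx0' : (∑ p ∈ pairIdx n, a p • eVec p.2) ∈ maxFace (AssIII n a) (-wFun n i) :=
    mem_maxFace_of_choice ha0 _ _ hbW' _ hsnd
      (fun p _ => by
        simp only [Pi.neg_apply, wFun]
        split_ifs <;> norm_num)
  have hp₀ : ∀ k : Fin n, ((k.castSucc, k.succ) : Fin (n+1) × Fin (n+1)) ∈ pairIdx n := by
    intro k
    simp only [pairIdx, Finset.mem_filter, Finset.mem_univ, true_and]
    rw [Fin.le_def]
    simp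
  have ha₀ : ∀ k : Fin n, a (k.castSucc, k.succ) ≠ 0 := by
    intro k
    exact ne_of_gt (ha _ (Finset.mem_filter.mp (hp₀ k)).2)
  -- generators of the w-face span
  have hgen : ∀ k : Fin n, (k:ℕ) + 1 ≠ i →
      (eVec k.castSucc - eVec k.succ) ∈ spanDiff (maxFace (AssIII n a) (wFun n i)) := by
    intro k hk
    have hg1 : ∀ p ∈ pairIdx n,
        p.1 ≤ (if p = (k.castSucc, k.succ) then k.succ else p.1) ∧
        (if p = (k.castSucc, k.succ) then k.succ else p.1) ≤ p.2 := by
      intro p hp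
      by_cases h : p = (k.castSucc, k.succ)
      · subst h
        simp only [if_pos rfl]
        refine ⟨?_, le_refl _⟩
        rw [Fin.le_def]
        simp
      · simp only [if_neg h]
        exact hfst p hp
    have hswap : (∑ p ∈ pairIdx n,
        a p • eVec (if p = (k.castSucc, k.succ) then k.succ else p.1))
        ∈ maxFace (AssIII n a) (wFun n i) := by
      apply mem_maxFace_of_choice ha0 _ _ hbW _ hg1
      intro p hp
      by_cases h : p = (k.castSucc, k.succ)
      · subst h
        have hks : ((k.succ : Fin (n+1)) : ℕ) = (k:ℕ)+1 := Fin.val_succ k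
        have hkc : ((k.castSucc : Fin (n+1)) : ℕ) = (k:ℕ) := Fin.coe_castSucc k
        simp only [if_pos rfl, wFun]
        split_ifs <;> try norm_num
        all_goals omega
      · simp only [if_neg h]; rfl
    have hdiff := diff_choice (a := a) Prod.fst
      (fun p => if p = (k.castSucc, k.succ) then k.succ else p.1)
      (k.castSucc, k.succ) (hp₀ k)
      (fun p _ hne => by simp only [if_neg hne])
    simp only [if_pos rfl] at hdiff
    exact diff_mem_spanDiff hx0 hswap _ (ha₀ k) hdiff
  -- generators of the (-w)-face span
  have hgen' : ∀ k : Fin n, (k:ℕ) + 1 ≠ i →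
      (eVec k.castSucc - eVec k.succ) ∈ spanDiff (maxFace (AssIII n a) (-wFun n i)) := by
    intro k hk
    have hg1 : ∀ p ∈ pairIdx n,
        p.1 ≤ (if p = (k.castSucc, k.succ) then k.castSucc else p.2) ∧
        (if p = (k.castSucc, k.succ) then k.castSucc else p.2) ≤ p.2 := by
      intro p hp
      by_cases h : p = (k.castSucc, k.succ)
      · subst h
        simp only [if_pos rfl]
        refine ⟨le_refl _, ?_⟩
        rw [Fin.le_def]
        simp
      · simp only [if_neg h]
        exact hsnd p hp
    have hswap : (∑ p ∈ pairIdx n,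
        a p • eVec (if p = (k.castSucc, k.succ) then k.castSucc else p.2))
        ∈ maxFace (AssIII n a) (-wFun n i) := by
      apply mem_maxFace_of_choice ha0 _ _ hbW' _ hg1
      intro p hp
      by_cases h : p = (k.castSucc, k.succ)
      · subst h
        have hks : ((k.succ : Fin (n+1)) : ℕ) = (k:ℕ)+1 := Fin.val_succ k
        have hkc : ((k.castSucc : Fin (n+1)) : ℕ) = (k:ℕ) := Fin.coe_castSucc k
        simp only [if_pos rfl, Pi.neg_apply, wFun]
        split_ifs <;> try norm_num
        all_goals omega
      · simp only [if_neg h, Pi.neg_apply, wFun]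
        split_ifs <;> norm_num
    have hdiff := diff_choice (a := a)
      (fun p => if p = (k.castSucc, k.succ) then k.castSucc else p.2)
      Prod.snd (k.castSucc, k.succ) (hp₀ k)
      (fun p _ hne => by simp only [if_neg hne])
    simp only [if_pos rfl] at hdiff
    exact diff_mem_spanDiff hswap hx0' _ (ha₀ k) hdiff
  -- generators of the polytope span
  have hgenP : ∀ k : Fin n,
      (eVec k.castSucc - eVec k.succ) ∈ spanDiff (AssIII n a) := by
    intro k
    have hg1 : ∀ p ∈ pairIdx n,
        p.1 ≤ (if p = (k.castSucc, k.succ) then k.succ else p.1) ∧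
        (if p = (k.castSucc, k.succ) then k.succ else p.1) ≤ p.2 := by
      intro p hp
      by_cases h : p = (k.castSucc, k.succ)
      · subst h
        simp only [if_pos rfl]
        refine ⟨?_, le_refl _⟩
        rw [Fin.le_def]
        simp
      · simp only [if_neg h]
        exact hfst p hp
    have hu : (∑ p ∈ pairIdx n, a p • eVec p.1) ∈ AssIII n a := memP Prod.fst hfst
    have hv : (∑ p ∈ pairIdx n,
        a p • eVec (if p = (k.castSucc, k.succ) then k.succ else p.1)) ∈ AssIII n a :=
      memP _ hg1
    have hdiff := diff_choice (a := a) Prod.fst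
      (fun p => if p = (k.castSucc, k.succ) then k.succ else p.1)
      (k.castSucc, k.succ) (hp₀ k)
      (fun p _ hne => by simp only [if_neg hne])
    simp only [if_pos rfl] at hdiff
    exact diff_mem_spanDiff hu hv _ (ha₀ k) hdiff
  -- span inclusions
  have hTF : Submodule.span ℝ {z : Fin (n+1) → ℝ |
      ∃ k : Fin n, (k : ℕ) + 1 ≠ i ∧ z = eVec k.castSucc - eVec k.succ}
      ≤ spanDiff (maxFace (AssIII n a) (wFun n i)) := by
    rw [Submodule.span_le]
    rintro z ⟨k, hk, rfl⟩
    exact hgen k hk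
  have hTF' : Submodule.span ℝ {z : Fin (n+1) → ℝ |
      ∃ k : Fin n, (k : ℕ) + 1 ≠ i ∧ z = eVec k.castSucc - eVec k.succ}
      ≤ spanDiff (maxFace (AssIII n a) (-wFun n i)) := by
    rw [Submodule.span_le]
    rintro z ⟨k, hk, rfl⟩
    exact hgen' k hk
  have hFk : spanDiff (maxFace (AssIII n a) (wFun n i)) ≤ LinearMap.ker (PhiMap n i) := by
    rw [spanDiff, Submodule.span_le]
    rintro z ⟨u, hu, v, hv, rfl⟩
    exact diff_mem_kerPhi i hu.1 hv.1 (le_antisymm (hv.2 u hu.1) (hu.2 v hv.1))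
  have hFk' : spanDiff (maxFace (AssIII n a) (-wFun n i)) ≤ LinearMap.ker (PhiMap n i) := by
    rw [spanDiff, Submodule.span_le]
    rintro z ⟨u, hu, v, hv, rfl⟩
    have hdot : dot (wFun n i) u = dot (wFun n i) v := by
      have h := le_antisymm (hv.2 u hu.1) (hu.2 v hv.1)
      rw [dot_neg, dot_neg] at h
      linarith
    exact diff_mem_kerPhi i hu.1 hv.1 hdot
  have hrk := finrank_ker_Phi (n := n) i hi1 hin
  have hrT := finrank_span_ne (n := n) i hi1 hin
  have hEq : spanDiff (maxFace (AssIII n a) (wFun n i)) =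
      Submodule.span ℝ {z : Fin (n+1) → ℝ |
        ∃ k : Fin n, (k : ℕ) + 1 ≠ i ∧ z = eVec k.castSucc - eVec k.succ} :=
    span_sandwich hTF hFk (by rw [hrk, hrT])
  have hEq' : spanDiff (maxFace (AssIII n a) (-wFun n i)) =
      Submodule.span ℝ {z : Fin (n+1) → ℝ |
        ∃ k : Fin n, (k : ℕ) + 1 ≠ i ∧ z = eVec k.castSucc - eVec k.succ} :=
    span_sandwich hTF' hFk' (by rw [hrk, hrT])
  -- dimension of the polytope
  have hPU : Submodule.span ℝ (Set.range (rootV n)) ≤ spanDiff (AssIII n a) := by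
    rw [Submodule.span_le]
    rintro z ⟨k, rfl⟩
    exact hgenP k
  have hPL : spanDiff (AssIII n a) ≤ LinearMap.ker (sumOn (univ : Finset (Fin (n+1)))) := by
    rw [spanDiff, Submodule.span_le]
    rintro z ⟨u, hu, v, hv, rfl⟩
    have : sumOn (univ : Finset (Fin (n+1))) (u - v) = 0 := by
      rw [map_sub, sumP u hu, sumP v hv, sub_self]
    exact LinearMap.mem_ker.mpr this
  have hPdim : spanDiff (AssIII n a) = Submodule.span ℝ (Set.range (rootV n)) :=
    span_sandwich hPU hPL (by rw [finrank_ker_sum, finrank_span_all])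
  have hdimP : dimOf (AssIII n a) = n := by
    rw [dimOf, hPdim, finrank_span_all]
  have hdimF : dimOf (maxFace (AssIII n a) (wFun n i)) = n - 1 := by
    rw [dimOf, hEq]; exact hrT
  have hdimF' : dimOf (maxFace (AssIII n a) (-wFun n i)) = n - 1 := by
    rw [dimOf, hEq']; exact hrT
  refine ⟨⟨⟨wFun n i, rfl⟩, by rw [hdimF, hdimP]; omega⟩,
    ⟨⟨-wFun n i, rfl⟩, by rw [hdimF', hdimP]; omega⟩,
    hEq, hEq', hEq.trans hEq'.symm⟩
end
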